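/- arXiv:1906.06230 — 2 statements merged into one kernel-verified Lean document; each statement's English description precedes it below -/
import Mathlib

section
/- Let Ω = (a,b) ⊆ ℝ be a bounded open interval, Q = Ω×(0,T), H ∈ W^{1,∞}(ℝ) with H(0)=0, k ∈ ℝ, and let u ∈ L¹(Q) satisfy, for every ζ(x,t) = α(x)β(t) with α ∈ C_c¹(Ω), β ∈ C_c¹(0,T), α,β ≥ 0, the inequality ∬_Q {[u−k]_± α(x)β'(t) + sgn_±(u−k)[H(u)−H(k)] α'(x)β(t)} dx dt ≥ 0 (for a fixed choice of sign). Then for every β ∈ C_c¹(0,T) with β ≥ 0, the essential limits as x → a⁺ and as x → b⁻ of the function x ↦ ∫₀^T sgn_±(u(x,t)−k)[H(u(x,t))−H(k)] β(t) dt exist and are finite. -/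
open MeasureTheory Filter Set
open scoped Topology ENNReal NNReal BigOperators

noncomputable section

/-- Integral of a function against a signed measure. -/
def sIntg {α : Type*} [MeasurableSpace α] (s : SignedMeasure α) (f : α → ℝ) : ℝ :=
  (∫ x, f x ∂s.toJordanDecomposition.posPart) -
    ∫ x, f x ∂s.toJordanDecomposition.negPart

/-- `sgn₊`. -/
def sgnp (v : ℝ) : ℝ := if 0 < v then 1 else 0

/-- `sgn₋`. -/
def sgnm (v : ℝ) : ℝ := if v < 0 then -1 else 0

/-- `sgn = sgn₊ + sgn₋`. -/
def sgn' (v : ℝ) : ℝ := sgnp v + sgnm v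

/-- positive part `[v]₊`. -/
def pp (v : ℝ) : ℝ := max v 0

/-- negative part `[v]₋`. -/
def np (v : ℝ) : ℝ := max (-v) 0

/-- `H ∈ W^{1,∞}(ℝ)`: bounded and Lipschitz. -/
def W1inf (H : ℝ → ℝ) : Prop :=
  (∃ C : ℝ, ∀ v, |H v| ≤ C) ∧ ∃ L : ℝ≥0, LipschitzWith L H

/-- Test functions `ζ ∈ C¹([0,T]; C_c¹(Ω))` with `ζ(·,T) = 0`. -/
structure IsTestCL (Ω : Set ℝ) (T : ℝ) (ζ : ℝ → ℝ → ℝ) : Prop where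
  smooth : ContDiff ℝ 1 (fun q : ℝ × ℝ => ζ q.1 q.2)
  supp : ∃ K : Set ℝ, IsCompact K ∧ K ⊆ Ω ∧
    ∀ t, Function.support (fun x => ζ x t) ⊆ K
  final : ∀ x, ζ x T = 0

/-- Essential limit of `f` at `x0` along the set `S` (avoiding a fixed null set). -/
def essLimWithin (f : ℝ → ℝ) (S : Set ℝ) (x0 l : ℝ) : Prop :=
  ∃ E : Set ℝ, volume E = 0 ∧
    ∀ x : ℕ → ℝ, (∀ n, x n ∈ S \ E) → Tendsto x atTop (𝓝 x0) →
      Tendsto (fun n => f (x n)) atTop (𝓝 l)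

/-- Nonnegative `C¹` test functions compactly supported in `(0,T)`. -/
def IsTestT (T : ℝ) (β : ℝ → ℝ) : Prop :=
  ContDiff ℝ 1 β ∧ HasCompactSupport β ∧ tsupport β ⊆ Ioo 0 T ∧ ∀ t, 0 ≤ β t

/-- The boundary-trace integrand `ξ ↦ ∫₀ᵀ sg(u(ξ,t) − k)[H(u(ξ,t)) − H(k)] β(t) dt`. -/
def BTrace (T : ℝ) (H sg : ℝ → ℝ) (u : ℝ → ℝ → ℝ) (k : ℝ) (β : ℝ → ℝ) : ℝ → ℝ :=
  fun ξ => ∫ t in Ioo (0:ℝ) T, sg (u ξ t - k) * (H (u ξ t) - H k) * β t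

/-- Interior entropy inequality (E+) on the space-time region `Q`. -/
def EntropyIneqP (Q : Set (ℝ × ℝ)) (H : ℝ → ℝ) (u : ℝ → ℝ → ℝ) : Prop :=
  ∀ k : ℝ, ∀ ζ : ℝ × ℝ → ℝ, ContDiff ℝ 1 ζ → HasCompactSupport ζ →
    tsupport ζ ⊆ Q → (∀ q, 0 ≤ ζ q) →
    0 ≤ ∫ q in Q, (pp (u q.1 q.2 - k) * fderiv ℝ ζ q (0, 1)
        + sgnp (u q.1 q.2 - k) * (H (u q.1 q.2) - H k) * fderiv ℝ ζ q (1, 0))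

/-- Interior entropy inequality (E−) on the space-time region `Q`. -/
def EntropyIneqM (Q : Set (ℝ × ℝ)) (H : ℝ → ℝ) (u : ℝ → ℝ → ℝ) : Prop :=
  ∀ k : ℝ, ∀ ζ : ℝ × ℝ → ℝ, ContDiff ℝ 1 ζ → HasCompactSupport ζ →
    tsupport ζ ⊆ Q → (∀ q, 0 ≤ ζ q) →
    0 ≤ ∫ q in Q, (np (u q.1 q.2 - k) * fderiv ℝ ζ q (0, 1)
        + sgnm (u q.1 q.2 - k) * (H (u q.1 q.2) - H k) * fderiv ℝ ζ q (1, 0))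

/-- `u ∈ C([0,T]; L¹(Ω))` (with `u = u(x,t)`). -/
def ContL1 (Ω : Set ℝ) (T : ℝ) (u : ℝ → ℝ → ℝ) : Prop :=
  (∀ t ∈ Icc (0:ℝ) T, IntegrableOn (fun x => u x t) Ω volume) ∧
  ∀ t₀ ∈ Icc (0:ℝ) T,
    Tendsto (fun t => ∫ x in Ω, |u x t - u x t₀|) (𝓝[Icc (0:ℝ) T] t₀) (𝓝 0)

/-- `u ∈ C([0,T]; L¹_loc(Ω))` (with `u = u(x,t)`). -/
def ContL1loc (Ω : Set ℝ) (T : ℝ) (u : ℝ → ℝ → ℝ) : Prop :=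
  ∀ K : Set ℝ, IsCompact K → K ⊆ Ω →
    (∀ t ∈ Icc (0:ℝ) T, IntegrableOn (fun x => u x t) K volume) ∧
    ∀ t₀ ∈ Icc (0:ℝ) T,
      Tendsto (fun t => ∫ x in K, |u x t - u x t₀|) (𝓝[Icc (0:ℝ) T] t₀) (𝓝 0)

/-- Initial condition (I+): `∫_I [u(·,t) − u₀]₊ → 0` as `t → 0⁺`, on every interval `I ⊆ Ω`. -/
def InitP (Ω : Set ℝ) (u0 : ℝ → ℝ) (u : ℝ → ℝ → ℝ) : Prop :=
  ∀ c d : ℝ, Ioo c d ⊆ Ω →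
    Tendsto (fun t => ∫ x in Ioo c d, pp (u x t - u0 x)) (𝓝[>] (0:ℝ)) (𝓝 0)

/-- Initial condition (I−): `∫_I [u(·,t) − u₀]₋ → 0` as `t → 0⁺`, on every interval `I ⊆ Ω`. -/
def InitM (Ω : Set ℝ) (u0 : ℝ → ℝ) (u : ℝ → ℝ → ℝ) : Prop :=
  ∀ c d : ℝ, Ioo c d ⊆ Ω →
    Tendsto (fun t => ∫ x in Ioo c d, np (u x t - u0 x)) (𝓝[>] (0:ℝ)) (𝓝 0)

namespace Stmt6Aux
open Metric

/-- smooth transition -/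
def χ : ℝ → ℝ := Real.smoothTransition

/-- its derivative -/
def dχ : ℝ → ℝ := deriv Real.smoothTransition

lemma χ_contDiff : ContDiff ℝ 1 χ := Real.smoothTransition.contDiff

lemma dχ_cont : Continuous dχ := χ_contDiff.continuous_deriv le_rfl

lemma χ_nonneg (s : ℝ) : 0 ≤ χ s := Real.smoothTransition.nonneg s
lemma χ_le_one (s : ℝ) : χ s ≤ 1 := Real.smoothTransition.le_one s
lemma χ_zero_of_nonpos {s : ℝ} (hs : s ≤ 0) : χ s = 0 :=
  Real.smoothTransition.zero_of_nonpos hs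
lemma χ_one_of_one_le {s : ℝ} (hs : 1 ≤ s) : χ s = 1 :=
  Real.smoothTransition.one_of_one_le hs

lemma dχ_zero_of_lt {s : ℝ} (hs : s < 0) : dχ s = 0 := by
  have h : χ =ᶠ[𝓝 s] fun _ => (0 : ℝ) := by
    filter_upwards [Iio_mem_nhds hs] with t ht
    exact χ_zero_of_nonpos ht.le
  simpa [dχ, χ] using h.deriv_eq.trans (deriv_const s 0)

lemma dχ_zero_of_gt {s : ℝ} (hs : 1 < s) : dχ s = 0 := by
  have h : χ =ᶠ[𝓝 s] fun _ => (1 : ℝ) := by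
    filter_upwards [Ioi_mem_nhds hs] with t ht
    exact χ_one_of_one_le ht.le
  simpa [dχ, χ] using h.deriv_eq.trans (deriv_const s 1)

lemma dχ_zero_at_zero : dχ 0 = 0 := by
  have h1 : Tendsto dχ (𝓝[<] (0:ℝ)) (𝓝 (dχ 0)) :=
    dχ_cont.continuousAt.continuousWithinAt
  have h2 : Tendsto dχ (𝓝[<] (0:ℝ)) (𝓝 0) := by
    refine tendsto_const_nhds.congr' ?_
    filter_upwards [self_mem_nhdsWithin] with t ht
    exact (dχ_zero_of_lt ht).symm
  exact tendsto_nhds_unique h1 h2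

lemma dχ_zero_at_one : dχ 1 = 0 := by
  have h1 : Tendsto dχ (𝓝[>] (1:ℝ)) (𝓝 (dχ 1)) :=
    dχ_cont.continuousAt.continuousWithinAt
  have h2 : Tendsto dχ (𝓝[>] (1:ℝ)) (𝓝 0) := by
    refine tendsto_const_nhds.congr' ?_
    filter_upwards [self_mem_nhdsWithin] with t ht
    exact (dχ_zero_of_gt ht).symm
  exact tendsto_nhds_unique h1 h2

lemma dχ_eq_zero {s : ℝ} (hs : s ≤ 0 ∨ 1 ≤ s) : dχ s = 0 := by
  rcases hs with hs | hs
  · rcases eq_or_lt_of_le hs with rfl | h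
    · exact dχ_zero_at_zero
    · exact dχ_zero_of_lt h
  · rcases eq_or_lt_of_le hs with rfl | h
    · exact dχ_zero_at_one
    · exact dχ_zero_of_gt h

lemma dχ_bound : ∃ M : ℝ, 0 ≤ M ∧ ∀ s, |dχ s| ≤ M := by
  have hsupp : HasCompactSupport dχ := by
    apply HasCompactSupport.intro (isCompact_Icc (a := (0:ℝ)) (b := 1))
    intro s hs
    simp only [mem_Icc, not_and_or, not_le] at hs
    exact dχ_eq_zero (by rcases hs with h | h; exacts [Or.inl h.le, Or.inr h.le])
  obtain ⟨Cb, hCb⟩ := hsupp.exists_bound_of_continuous dχ_cont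
  exact ⟨max Cb 0, le_max_right _ _, fun s => (hCb s).trans (le_max_left _ _)⟩

/-- the kernel -/
def ker (h z s : ℝ) : ℝ := h⁻¹ * dχ ((s - z) / h)

lemma hasDerivAt_ramp {h : ℝ} (hh : 0 < h) (z s : ℝ) :
    HasDerivAt (fun s => χ ((s - z) / h)) (ker h z s) s := by
  have h1 : HasDerivAt (fun s : ℝ => (s - z) / h) (1 / h) s :=
    ((hasDerivAt_id s).sub_const z).div_const h
  have h2 : HasDerivAt χ (dχ ((s - z) / h)) ((s - z) / h) :=
    ((Real.smoothTransition.contDiff (n := 1)).differentiable one_ne_zero ((s - z)/h)).hasDerivAt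
  have := h2.comp s h1
  rw [show ker h z s = dχ ((s - z) / h) * (1 / h) by rw [ker]; ring]
  exact this

lemma ker_cont {h : ℝ} (z : ℝ) : Continuous (fun s => ker h z s) :=
  continuous_const.mul (dχ_cont.comp ((continuous_id.sub continuous_const).div_const h))

lemma ker_eq_zero {h z s : ℝ} (hh : 0 < h) (hs : s ≤ z ∨ z + h ≤ s) : ker h z s = 0 := by
  rw [ker]
  rcases hs with h1 | h1
  · rw [dχ_eq_zero (Or.inl (div_nonpos_iff.2 (Or.inr ⟨by linarith, hh.le⟩)))]
    ring
  · rw [dχ_eq_zero (Or.inr ((le_div_iff₀ hh).2 (by linarith)))]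
    ring

lemma ker_integral {h : ℝ} (hh : 0 < h) (z : ℝ) : ∫ s, ker h z s = 1 := by
  have hz : ∀ s, s ∉ Icc z (z + h) → ker h z s = 0 := by
    intro s hs
    simp only [mem_Icc, not_and_or, not_le] at hs
    exact ker_eq_zero hh (by rcases hs with h1 | h1; exacts [Or.inl h1.le, Or.inr h1.le])
  rw [← setIntegral_eq_integral_of_forall_compl_eq_zero hz]
  rw [integral_Icc_eq_integral_Ioc, ← intervalIntegral.integral_of_le (by linarith)]
  rw [intervalIntegral.integral_eq_sub_of_hasDerivAt
    (fun s _ => hasDerivAt_ramp hh z s) ((ker_cont z).intervalIntegrable _ _)]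
  simp [χ, add_sub_cancel_left, div_self hh.ne', Real.smoothTransition.one,
    Real.smoothTransition.zero]

end Stmt6Aux

namespace Stmt6Aux
open Metric

lemma ae_ker_tendsto (f : ℝ → ℝ) (hf : Integrable f) :
    ∀ᵐ z : ℝ, Tendsto (fun h => ∫ s, ker h z s * f s) (𝓝[>] (0:ℝ)) (𝓝 (f z)) := by
  obtain ⟨M, hM0, hM⟩ := dχ_bound
  filter_upwards [IsUnifLocDoublingMeasure.ae_tendsto_average_norm_sub
    (volume : Measure ℝ) (hf.locallyIntegrable) 1] with z hz
  have havg : Tendsto (fun h : ℝ => ⨍ y in closedBall z h, ‖f y - f z‖) (𝓝[>] 0) (𝓝 0) := by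
    refine hz (fun _ => z) id tendsto_id ?_
    filter_upwards [self_mem_nhdsWithin] with h hh
    exact mem_closedBall_self (by simp only [one_mul]; exact le_of_lt hh)
  have main := tendsto_integral_smul_of_tendsto_average_norm_sub (μ := volume)
    (a := fun h : ℝ => closedBall z h) (l := 𝓝[>] (0:ℝ)) (f := f) (c := f z)
    (g := fun h s => ker h z s) (2 * M) havg
    (Eventually.of_forall fun _ => hf.integrableOn)
    (by
      refine tendsto_const_nhds.congr' ?_
      filter_upwards [self_mem_nhdsWithin] with h hh
      exact (ker_integral hh z).symm)
    (by
      filter_upwards [self_mem_nhdsWithin] with h hh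
      have hh' : (0:ℝ) < h := hh
      intro s hs
      rw [Function.mem_support] at hs
      simp only [mem_closedBall, Real.dist_eq]
      rcases le_or_gt s z with h3 | h3
      · exact absurd (ker_eq_zero hh' (Or.inl h3)) hs
      rcases le_or_gt (z + h) s with h4 | h4
      · exact absurd (ker_eq_zero hh' (Or.inr h4)) hs
      rw [abs_of_pos (by linarith)]; linarith)
    (by
      filter_upwards [self_mem_nhdsWithin] with h hh
      have hh' : (0:ℝ) < h := hh
      intro s
      rw [Real.volume_real_closedBall hh'.le]
      have hb1 : |ker h z s| ≤ h⁻¹ * M := by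
        rw [ker, abs_mul, abs_inv, abs_of_pos hh']
        exact mul_le_mul_of_nonneg_left (hM _) (by positivity)
      calc |ker h z s| ≤ h⁻¹ * M := hb1
        _ = 2 * M / (2 * h) := by field_simp)
  refine main.congr fun h => ?_
  simp [smul_eq_mul]

/-- ramp-difference test function properties -/
lemma ramp_props {a b x y h : ℝ} (hax : a < x) (hxy : x < y) (hyb : y + h < b)
    (hh : 0 < h) (hhxy : h < y - x) :
    ContDiff ℝ 1 (fun s => χ ((s - x) / h) - χ ((s - y) / h)) ∧
    HasCompactSupport (fun s => χ ((s - x) / h) - χ ((s - y) / h)) ∧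
    tsupport (fun s => χ ((s - x) / h) - χ ((s - y) / h)) ⊆ Ioo a b ∧
    (∀ s, 0 ≤ χ ((s - x) / h) - χ ((s - y) / h) ∧ χ ((s - x) / h) - χ ((s - y) / h) ≤ 1) ∧
    deriv (fun s => χ ((s - x) / h) - χ ((s - y) / h)) = fun s => ker h x s - ker h y s := by
  have hcd : ContDiff ℝ 1 (fun s : ℝ => χ ((s - x) / h) - χ ((s - y) / h)) := by
    apply ContDiff.sub
    · exact χ_contDiff.comp ((contDiff_id.sub contDiff_const).div_const h)
    · exact χ_contDiff.comp ((contDiff_id.sub contDiff_const).div_const h)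
  have hzero : ∀ s, s ∉ Icc x (y + h) → χ ((s - x) / h) - χ ((s - y) / h) = 0 := by
    intro s hs
    simp only [mem_Icc, not_and_or, not_le] at hs
    rcases hs with h1 | h1
    · rw [χ_zero_of_nonpos (div_nonpos_iff.2 (Or.inr ⟨by linarith, hh.le⟩)),
        χ_zero_of_nonpos (div_nonpos_iff.2 (Or.inr ⟨by linarith, hh.le⟩))]
      ring
    · rw [χ_one_of_one_le ((le_div_iff₀ hh).2 (by linarith)),
        χ_one_of_one_le ((le_div_iff₀ hh).2 (by linarith))]
      ring
  have hsupp : HasCompactSupport (fun s => χ ((s - x) / h) - χ ((s - y) / h)) :=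
    HasCompactSupport.intro isCompact_Icc hzero
  refine ⟨hcd, hsupp, ?_, ?_, ?_⟩
  · refine (closure_minimal (fun s hs => ?_) (isClosed_Icc (a := x) (b := y + h))).trans
      (Icc_subset_Ioo hax (by linarith))
    rw [Function.mem_support] at hs
    by_contra hcon
    exact hs (hzero s hcon)
  · intro s
    rcases le_or_gt ((s - y) / h) 0 with h1 | h1
    · rw [χ_zero_of_nonpos h1]
      constructor
      · simpa using χ_nonneg _
      · simpa using χ_le_one _
    · have h2 : (1:ℝ) ≤ (s - x) / h := by
        rw [le_div_iff₀ hh]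
        have := (div_pos_iff.1 h1)
        rcases this with ⟨hn, _⟩ | ⟨_, hd⟩
        · linarith
        · linarith
      rw [χ_one_of_one_le h2]
      constructor
      · linarith [χ_le_one ((s - y) / h)]
      · linarith [χ_nonneg ((s - y) / h)]
  · funext s
    exact (((hasDerivAt_ramp hh x s).sub (hasDerivAt_ramp hh y s))).deriv

lemma ker_bound {h : ℝ} (hh : 0 < h) (z : ℝ) : ∃ Mk : ℝ, ∀ s, ‖ker h z s‖ ≤ Mk := by
  obtain ⟨M, hM0, hM⟩ := dχ_bound
  refine ⟨h⁻¹ * M, fun s => ?_⟩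
  rw [Real.norm_eq_abs, ker, abs_mul, abs_inv, abs_of_pos hh]
  exact mul_le_mul_of_nonneg_left (hM _) (by positivity)

end Stmt6Aux

open Stmt6Aux

/-- Remark 5.4: for an `L¹` function satisfying the one-sign entropy
inequality with separated test functions, the one-sided essential limits of the boundary
flux exist (and are finite) at both endpoints. -/
theorem stmt6 (a b T : ℝ) (hab : a < b) (hT : 0 < T)
    (H : ℝ → ℝ) (hW : W1inf H) (hH0 : H 0 = 0) (k : ℝ)
    (u : ℝ → ℝ → ℝ)
    (hu : IntegrableOn (fun q : ℝ × ℝ => u q.1 q.2) (Ioo a b ×ˢ Ioo 0 T) volume)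
    (sg P : ℝ → ℝ) (hsg : (sg = sgnp ∧ P = pp) ∨ (sg = sgnm ∧ P = np))
    (hineq : ∀ α β : ℝ → ℝ,
      ContDiff ℝ 1 α → HasCompactSupport α → tsupport α ⊆ Ioo a b → (∀ x, 0 ≤ α x) →
      ContDiff ℝ 1 β → HasCompactSupport β → tsupport β ⊆ Ioo 0 T → (∀ t, 0 ≤ β t) →
      0 ≤ ∫ t in Ioo (0:ℝ) T, ∫ x in Ioo a b,
        (P (u x t - k) * α x * deriv β t
          + sg (u x t - k) * (H (u x t) - H k) * deriv α x * β t)) :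
    ∀ β : ℝ → ℝ, ContDiff ℝ 1 β → HasCompactSupport β → tsupport β ⊆ Ioo 0 T →
      (∀ t, 0 ≤ β t) →
      (∃ l : ℝ, essLimWithin (BTrace T H sg u k β) (Ioi a) a l) ∧
      (∃ l : ℝ, essLimWithin (BTrace T H sg u k β) (Iio b) b l) := by
  classical
  obtain ⟨⟨C, hC⟩, Lip, hLip⟩ := hW
  have hC0 : 0 ≤ C := le_trans (abs_nonneg _) (hC 0)
  have hsg_meas : Measurable sg := by
    rcases hsg with ⟨h1, _⟩ | ⟨h1, _⟩ <;> subst h1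
    · exact Measurable.ite (measurableSet_lt measurable_const measurable_id)
        measurable_const measurable_const
    · exact Measurable.ite (measurableSet_lt measurable_id measurable_const)
        measurable_const measurable_const
  have hsg_bd : ∀ v, |sg v| ≤ 1 := by
    rcases hsg with ⟨h1, _⟩ | ⟨h1, _⟩ <;> subst h1 <;> intro v <;>
      simp only [sgnp, sgnm] <;> split <;> norm_num
  have hP_cont : Continuous P := by
    rcases hsg with ⟨_, h2⟩ | ⟨_, h2⟩ <;> subst h2
    · exact continuous_id.max continuous_const
    · exact continuous_neg.max continuous_const
  have hP_bd : ∀ v, |P v| ≤ |v| := by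
    rcases hsg with ⟨_, h2⟩ | ⟨_, h2⟩ <;> subst h2 <;> intro v
    · rw [pp, abs_of_nonneg (le_max_right _ _)]
      exact max_le (le_abs_self v) (abs_nonneg v)
    · rw [np, abs_of_nonneg (le_max_right _ _)]
      exact max_le (neg_le_abs v) (abs_nonneg v)
  intro β hβ1 hβ2 hβ3 hβ4
  obtain ⟨Mβ, hMβ⟩ := hβ2.exists_bound_of_continuous hβ1.continuous
  have hβd_cont : Continuous (deriv β) := hβ1.continuous_deriv le_rfl
  obtain ⟨Mβ', hMβ'⟩ := (hβ2.deriv).exists_bound_of_continuous hβd_cont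
  have hMβ0 : 0 ≤ Mβ := le_trans (norm_nonneg _) (hMβ 0)
  set μa := volume.restrict (Ioo a b) with hμa
  set μT := volume.restrict (Ioo 0 T) with hμT
  haveI : IsFiniteMeasure μa :=
    ⟨by rw [Measure.restrict_apply_univ]; exact measure_Ioo_lt_top⟩
  haveI : IsFiniteMeasure μT :=
    ⟨by rw [Measure.restrict_apply_univ]; exact measure_Ioo_lt_top⟩
  set U : ℝ × ℝ → ℝ := fun q => u q.1 q.2 with hUdef
  have hu' : Integrable U (μa.prod μT) := by
    rw [hμa, hμT, Measure.prod_restrict, ← Measure.volume_eq_prod]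
    exact hu
  set S : ℝ × ℝ → ℝ := fun q => sg (U q - k) * (H (U q) - H k) * β q.2 with hSdef
  set Pf : ℝ × ℝ → ℝ := fun q => P (U q - k) * deriv β q.2 with hPfdef
  have hsgU : AEStronglyMeasurable (fun q => sg (U q - k)) (μa.prod μT) :=
    (hsg_meas.comp_aemeasurable (hu'.aemeasurable.sub aemeasurable_const)).aestronglyMeasurable
  have hS_m : AEStronglyMeasurable S (μa.prod μT) := by
    refine (hsgU.mul ?_).mul ?_
    · exact ((hLip.continuous.comp_aestronglyMeasurable hu'.aestronglyMeasurable).sub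
        aestronglyMeasurable_const)
    · exact (hβ1.continuous.comp continuous_snd).aestronglyMeasurable
  have hS_bd : ∀ q, ‖S q‖ ≤ (C + C) * Mβ := by
    intro q
    rw [hSdef]
    simp only [Real.norm_eq_abs, abs_mul]
    have h1 : |sg (U q - k)| * |H (U q) - H k| ≤ 1 * (C + C) := by
      apply mul_le_mul (hsg_bd _) ?_ (abs_nonneg _) zero_le_one
      exact (abs_sub _ _).trans (add_le_add (hC _) (hC _))
    calc |sg (U q - k)| * |H (U q) - H k| * |β q.2| ≤ (1 * (C + C)) * Mβ := by
          apply mul_le_mul h1 ?_ (abs_nonneg _) (by positivity)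
          simpa using hMβ q.2
      _ = (C + C) * Mβ := by ring
  have hS_int : Integrable S (μa.prod μT) :=
    Integrable.mono' (integrable_const ((C + C) * Mβ)) hS_m (Eventually.of_forall hS_bd)
  have hPf_m : AEStronglyMeasurable Pf (μa.prod μT) := by
    refine AEStronglyMeasurable.mul ?_ ?_
    · exact hP_cont.comp_aestronglyMeasurable
        (hu'.aestronglyMeasurable.sub aestronglyMeasurable_const)
    · exact (hβd_cont.comp continuous_snd).aestronglyMeasurable
  have hPf_bd : ∀ q, ‖Pf q‖ ≤ Mβ' * (‖U q‖ + |k|) := by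
    intro q
    rw [hPfdef]
    simp only [Real.norm_eq_abs, abs_mul]
    have h1 : |P (U q - k)| ≤ |U q| + |k| :=
      (hP_bd _).trans ((abs_sub _ _).trans (by rfl))
    calc |P (U q - k)| * |deriv β q.2| ≤ (|U q| + |k|) * Mβ' := by
          apply mul_le_mul h1 ?_ (abs_nonneg _) (by positivity)
          simpa using hMβ' q.2
      _ = Mβ' * (|U q| + |k|) := by ring
  have hPf_int : Integrable Pf (μa.prod μT) := by
    refine Integrable.mono' (((hu'.norm.add (integrable_const |k|)).const_mul Mβ')) hPf_m
      (Eventually.of_forall fun q => ?_)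
    simpa using hPf_bd q
  -- the boundary flux and interior term
  set F : ℝ → ℝ := BTrace T H sg u k β with hFdef
  have hFS : ∀ x, F x = ∫ t, S (x, t) ∂μT := fun x => rfl
  set G : ℝ → ℝ := fun x => ∫ t, Pf (x, t) ∂μT with hGdef
  have hF_m : AEStronglyMeasurable F μa := by
    have := hS_m.integral_prod_right' (ν := μT)
    exact this.congr (Eventually.of_forall fun x => (hFS x).symm)
  set B₁ : ℝ := (C + C) * Mβ * (μT univ).toReal with hB₁
  have hF_bd : ∀ x, ‖F x‖ ≤ B₁ := by
    intro x
    rw [hFS x, hB₁]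
    exact norm_integral_le_of_norm_le_const (Eventually.of_forall fun t => hS_bd (x, t))
  have hF_int : Integrable F μa :=
    Integrable.mono' (integrable_const B₁) hF_m (Eventually.of_forall hF_bd)
  have hG_m : AEStronglyMeasurable G μa := hPf_m.integral_prod_right'
  have hG_int : Integrable G μa := hPf_int.integral_prod_left
  -- key inequality with a single space test function
  have key : ∀ α : ℝ → ℝ, ContDiff ℝ 1 α → HasCompactSupport α → tsupport α ⊆ Ioo a b →
      (∀ x, 0 ≤ α x) → 0 ≤ ∫ x, (α x * G x + deriv α x * F x) ∂μa := by
    intro α hα1 hα2 hα3 hα4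
    obtain ⟨Mα, hMα⟩ := hα2.exists_bound_of_continuous hα1.continuous
    obtain ⟨Mα', hMα'⟩ := (hα2.deriv).exists_bound_of_continuous (hα1.continuous_deriv le_rfl)
    have h0 := hineq α β hα1 hα2 hα3 hα4 hβ1 hβ2 hβ3 hβ4
    set φ : ℝ × ℝ → ℝ := fun q => α q.1 * Pf q + deriv α q.1 * S q with hφdef
    have hφ_int : Integrable φ (μa.prod μT) := by
      refine Integrable.add ?_ ?_
      · exact hPf_int.bdd_mul ((hα1.continuous.comp continuous_fst).aestronglyMeasurable)
          (Eventually.of_forall fun q => hMα q.1)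
      · exact hS_int.bdd_mul (((hα1.continuous_deriv le_rfl).comp
          continuous_fst).aestronglyMeasurable) (Eventually.of_forall fun q => hMα' q.1)
    have hswap : (∫ t, ∫ x, φ (x, t) ∂μa ∂μT) = ∫ x, ∫ t, φ (x, t) ∂μT ∂μa :=
      (integral_integral_swap (f := fun x t => φ (x, t)) hφ_int).symm
    have h1 : (∫ t, ∫ x, φ (x, t) ∂μa ∂μT) = ∫ t in Ioo (0:ℝ) T, ∫ x in Ioo a b,
        (P (u x t - k) * α x * deriv β t
          + sg (u x t - k) * (H (u x t) - H k) * deriv α x * β t) := by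
      refine integral_congr_ae (Eventually.of_forall fun t => ?_)
      refine integral_congr_ae (Eventually.of_forall fun x => ?_)
      simp only [hφdef, hSdef, hPfdef, hUdef]
      ring
    have h2 : (∫ x, ∫ t, φ (x, t) ∂μT ∂μa) = ∫ x, (α x * G x + deriv α x * F x) ∂μa := by
      refine integral_congr_ae ?_
      filter_upwards [hPf_int.prod_right_ae, hS_int.prod_right_ae] with x hpx hsx
      rw [hFS, hGdef]
      rw [show (fun t => φ (x, t)) = fun t => α x * Pf (x, t) + deriv α x * S (x, t) from rfl]
      rw [integral_add (hpx.const_mul _) (hsx.const_mul _), integral_const_mul, integral_const_mul]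
    rw [← h2, ← hswap, h1]
    exact h0
  -- the indicator extension of F and the good set L
  set fF : ℝ → ℝ := indicator (Ioo a b) F with hfFdef
  have hfF_int : Integrable fF volume := by
    rw [hfFdef, integrable_indicator_iff measurableSet_Ioo]
    exact hF_int
  set L : Set ℝ := Ioo a b ∩ {z | Tendsto (fun h => ∫ s, ker h z s * fF s)
      (𝓝[>] (0:ℝ)) (𝓝 (fF z))} with hLdef
  have hLsub : L ⊆ Ioo a b := inter_subset_left
  have hLnull : volume (Ioo a b \ L) = 0 := by
    have hae := ae_ker_tendsto fF hfF_int
    rw [ae_iff] at hae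
    refine measure_mono_null ?_ hae
    rintro z ⟨hz1, hz2⟩
    simp only [hLdef, mem_inter_iff, mem_setOf_eq, not_and] at hz2
    exact hz2 hz1
  -- a.e. monotonicity
  have hmono : ∀ x ∈ L, ∀ y ∈ L, x < y → F y ≤ F x + ∫ s in Ioo x y, G s := by
    intro x hx y hy hxy
    simp only [hLdef, mem_inter_iff, mem_setOf_eq] at hx hy
    obtain ⟨hxab, hxT⟩ := hx
    obtain ⟨hyab, hyT⟩ := hy
    have hmin : (0:ℝ) < min (y - x) (b - y) := lt_min (by linarith) (by linarith [hyab.2])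
    have hev : ∀ᶠ h in 𝓝[>] (0:ℝ), h ∈ Ioo 0 (min (y - x) (b - y)) :=
      Ioo_mem_nhdsGT_of_mem ⟨le_rfl, hmin⟩
    have hy0 : μa {y} = 0 := by
      rw [hμa, Measure.restrict_apply (measurableSet_singleton y)]
      exact measure_mono_null inter_subset_left Real.volume_singleton
    have hsney : ∀ᵐ s ∂μa, s ≠ y := by
      rw [ae_iff]
      convert hy0 using 2
      ext s; simp
    have hacont : ∀ h : ℝ, Continuous (fun s => χ ((s - x) / h) - χ ((s - y) / h)) := by
      intro h
      exact (χ_contDiff.continuous.comp ((continuous_id.sub continuous_const).div_const h)).sub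
        (χ_contDiff.continuous.comp ((continuous_id.sub continuous_const).div_const h))
    have hGlim : Tendsto (fun h => ∫ s, (χ ((s - x) / h) - χ ((s - y) / h)) * G s ∂μa)
        (𝓝[>] (0:ℝ)) (𝓝 (∫ s in Ioo x y, G s)) := by
      have hrw : (∫ s in Ioo x y, G s) = ∫ s, indicator (Ioo x y) G s ∂μa := by
        rw [integral_indicator measurableSet_Ioo, hμa,
          Measure.restrict_restrict measurableSet_Ioo,
          inter_eq_self_of_subset_left (Ioo_subset_Ioo hxab.1.le hyab.2.le)]
      rw [hrw]
      refine tendsto_integral_filter_of_dominated_convergence (fun s => ‖G s‖) ?_ ?_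
        hG_int.norm ?_
      · filter_upwards [hev] with h hh
        exact ((hacont h).aestronglyMeasurable).mul hG_m
      · filter_upwards [hev] with h hh
        have hh' : (0:ℝ) < h := hh.1
        have hhyx : h < y - x := lt_of_lt_of_le hh.2 (min_le_left _ _)
        have hhyb : y + h < b := by
          have := lt_of_lt_of_le hh.2 (min_le_right _ _); linarith
        obtain ⟨_, _, _, hc4, _⟩ := ramp_props hxab.1 hxy hhyb hh' hhyx
        refine Eventually.of_forall fun s => ?_
        rw [norm_mul]
        refine mul_le_of_le_one_left (norm_nonneg _) ?_
        rw [Real.norm_eq_abs, abs_le]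
        exact ⟨by linarith [(hc4 s).1], (hc4 s).2⟩
      · filter_upwards [hsney] with s hs
        rcases lt_trichotomy s y with hsy | hsy | hsy
        · rcases le_or_gt s x with hsx | hsx
          · rw [indicator_of_notMem (by simp only [mem_Ioo, not_and_or, not_lt]; exact Or.inl hsx)]
            refine tendsto_const_nhds.congr' ?_
            filter_upwards [self_mem_nhdsWithin] with h hh
            have hh' : (0:ℝ) < h := hh
            rw [χ_zero_of_nonpos (div_nonpos_iff.2 (Or.inr ⟨by linarith, hh'.le⟩)),
              χ_zero_of_nonpos (div_nonpos_iff.2 (Or.inr ⟨by linarith, hh'.le⟩))]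
            ring
          · rw [indicator_of_mem (show s ∈ Ioo x y from ⟨hsx, hsy⟩) G]
            have : ∀ᶠ h in 𝓝[>] (0:ℝ), h ∈ Ioo 0 (s - x) :=
              Ioo_mem_nhdsGT_of_mem ⟨le_rfl, by linarith⟩
            refine tendsto_const_nhds.congr' ?_
            filter_upwards [this] with h hh
            rw [χ_one_of_one_le ((le_div_iff₀ hh.1).2 (by linarith [hh.2])),
              χ_zero_of_nonpos (div_nonpos_iff.2 (Or.inr ⟨by linarith, hh.1.le⟩))]
            ring
        · exact absurd hsy hs
        · rw [indicator_of_notMem (by simp only [mem_Ioo, not_and_or, not_lt]; exact Or.inr hsy.le)]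
          have : ∀ᶠ h in 𝓝[>] (0:ℝ), h ∈ Ioo 0 (s - y) :=
            Ioo_mem_nhdsGT_of_mem ⟨le_rfl, by linarith⟩
          refine tendsto_const_nhds.congr' ?_
          filter_upwards [this] with h hh
          rw [χ_one_of_one_le ((le_div_iff₀ hh.1).2 (by linarith [hh.2])),
            χ_one_of_one_le ((le_div_iff₀ hh.1).2 (by nlinarith [hh.2, hh.1]))]
          ring
    have hkey_h : ∀ᶠ h in 𝓝[>] (0:ℝ),
        0 ≤ (∫ s, (χ ((s - x) / h) - χ ((s - y) / h)) * G s ∂μa)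
          + ((∫ s, ker h x s * fF s) - (∫ s, ker h y s * fF s)) := by
      filter_upwards [hev] with h hh
      have hh' : (0:ℝ) < h := hh.1
      have hhyx : h < y - x := lt_of_lt_of_le hh.2 (min_le_left _ _)
      have hhyb : y + h < b := by
        have := lt_of_lt_of_le hh.2 (min_le_right _ _); linarith
      obtain ⟨hc1, hc2, hc3, hc4, hc5⟩ := ramp_props hxab.1 hxy hhyb hh' hhyx
      have h0 := key _ hc1 hc2 hc3 (fun s => (hc4 s).1)
      simp only [hc5] at h0
      have hint1 : Integrable (fun s => (χ ((s - x) / h) - χ ((s - y) / h)) * G s) μa :=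
        hG_int.bdd_mul (c := 1) ((hacont h).aestronglyMeasurable)
          (Eventually.of_forall fun s => by
            rw [Real.norm_eq_abs, abs_le]
            exact ⟨by linarith [(hc4 s).1], (hc4 s).2⟩)
      have hint2 : Integrable (fun s => ker h x s * F s) μa :=
        hF_int.bdd_mul (ker_cont x).aestronglyMeasurable (Eventually.of_forall (ker_bound hh' x).choose_spec)
      have hint3 : Integrable (fun s => ker h y s * F s) μa :=
        hF_int.bdd_mul (ker_cont y).aestronglyMeasurable (Eventually.of_forall (ker_bound hh' y).choose_spec)
      have hsplit : (∫ s, ((χ ((s - x) / h) - χ ((s - y) / h)) * G s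
            + (ker h x s - ker h y s) * F s) ∂μa)
          = (∫ s, (χ ((s - x) / h) - χ ((s - y) / h)) * G s ∂μa)
            + ((∫ s, ker h x s * F s ∂μa) - (∫ s, ker h y s * F s ∂μa)) := by
        rw [show (fun s => (χ ((s - x) / h) - χ ((s - y) / h)) * G s
            + (ker h x s - ker h y s) * F s)
          = fun s => (χ ((s - x) / h) - χ ((s - y) / h)) * G s
            + (ker h x s * F s - ker h y s * F s) from by funext s; ring]
        have hint23 : Integrable (fun s => ker h x s * F s - ker h y s * F s) μa :=
          hint2.sub hint3
        rw [integral_add hint1 hint23, integral_sub hint2 hint3]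
      have hcast : ∀ z : ℝ, (∫ s, ker h z s * F s ∂μa) = ∫ s, ker h z s * fF s := by
        intro z
        rw [hμa, ← integral_indicator measurableSet_Ioo]
        congr 1
        funext s
        by_cases hsm : s ∈ Ioo a b
        · simp [hfFdef, indicator_of_mem hsm]
        · simp [hfFdef, indicator_of_notMem hsm]
      rw [hsplit, hcast x, hcast y] at h0
      exact h0
    have hlim : Tendsto (fun h => (∫ s, (χ ((s - x) / h) - χ ((s - y) / h)) * G s ∂μa)
        + ((∫ s, ker h x s * fF s) - (∫ s, ker h y s * fF s))) (𝓝[>] (0:ℝ))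
        (𝓝 ((∫ s in Ioo x y, G s) + (fF x - fF y))) := hGlim.add (hxT.sub hyT)
    have hfin := ge_of_tendsto hlim hkey_h
    rw [hfFdef, indicator_of_mem hxab, indicator_of_mem hyab] at hfin
    linarith
  -- the primitive of G and the monotone function Φ
  set W : ℝ → ℝ := fun z => ∫ s in Ioo a z, G s with hWdef
  set Φ : ℝ → ℝ := fun z => F z - W z with hΦdef
  set B₂ : ℝ := ∫ s in Ioo a b, ‖G s‖ with hB₂
  have hG_int' : IntegrableOn G (Ioo a b) volume := hG_int
  have hW_bd : ∀ z ∈ Ioo a b, ‖W z‖ ≤ B₂ := by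
    intro z hz
    simp only [hWdef, hB₂]
    refine (norm_integral_le_integral_norm _).trans ?_
    refine setIntegral_mono_set hG_int'.norm (Eventually.of_forall fun s => norm_nonneg _) ?_
    exact HasSubset.Subset.eventuallyLE (Ioo_subset_Ioo le_rfl hz.2.le)
  have hΦmono : ∀ x ∈ L, ∀ y ∈ L, x < y → Φ y ≤ Φ x := by
    intro x hx y hy hxy
    have h1 := hmono x hx y hy hxy
    have hxab := hLsub hx
    have hyab := hLsub hy
    have hWsplit : W y = W x + ∫ s in Ioo x y, G s := by
      simp only [hWdef]
      have hunion : Ioo a x ∪ Ico x y = Ioo a y := Ioo_union_Ico_eq_Ioo hxab.1 hxy.le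
      rw [← hunion, setIntegral_union (disjoint_left.2 fun s h1 h2 => absurd h2.1 (not_le.2 h1.2))
        measurableSet_Ico (hG_int'.mono_set (Ioo_subset_Ioo le_rfl (by linarith [hyab.2])))
        (hG_int'.mono_set (fun s hs => ⟨lt_of_lt_of_le hxab.1 hs.1, lt_trans hs.2 hyab.2⟩)),
        integral_Ico_eq_integral_Ioo]
    simp only [hΦdef]
    rw [hWsplit]
    linarith
  have hLne : L.Nonempty := by
    by_contra hLe
    rw [not_nonempty_iff_eq_empty] at hLe
    rw [hLe, diff_empty, Real.volume_Ioo] at hLnull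
    rw [ENNReal.ofReal_eq_zero] at hLnull
    linarith
  have hΦbddA : BddAbove (Φ '' L) := by
    refine ⟨B₁ + B₂, ?_⟩
    rintro w ⟨z, hz, rfl⟩
    have h1 := hF_bd z
    have h2 := hW_bd z (hLsub hz)
    rw [Real.norm_eq_abs, abs_le] at h1 h2
    simp only [hΦdef]
    linarith [h1.1, h1.2, h2.1, h2.2]
  have hΦbddB : BddBelow (Φ '' L) := by
    refine ⟨-(B₁ + B₂), ?_⟩
    rintro w ⟨z, hz, rfl⟩
    have h1 := hF_bd z
    have h2 := hW_bd z (hLsub hz)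
    rw [Real.norm_eq_abs, abs_le] at h1 h2
    simp only [hΦdef]
    linarith [h1.1, h1.2, h2.1, h2.2]
  constructor
  · -- limit at a
    refine ⟨sSup (Φ '' L), Ioo a b \ L, hLnull, ?_⟩
    intro xs hxs hxlim
    have hb' : ∀ᶠ n in atTop, xs n < b := hxlim.eventually_lt_const hab
    have hLn : ∀ᶠ n in atTop, xs n ∈ L := by
      filter_upwards [hb'] with n hn
      have h1 := hxs n
      by_contra hcon
      exact h1.2 ⟨⟨h1.1, hn⟩, hcon⟩
    have hΦt : Tendsto (fun n => Φ (xs n)) atTop (𝓝 (sSup (Φ '' L))) := by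
      rw [tendsto_order]
      constructor
      · intro c hc
        obtain ⟨w, ⟨z, hzL, rfl⟩, hcw⟩ := exists_lt_of_lt_csSup (hLne.image Φ) hc
        have hza : a < z := (hLsub hzL).1
        filter_upwards [hLn, hxlim.eventually_lt_const hza] with n h1 h2
        exact lt_of_lt_of_le hcw (hΦmono _ h1 _ hzL h2)
      · intro c hc
        filter_upwards [hLn] with n h1
        exact lt_of_le_of_lt (le_csSup hΦbddA ⟨_, h1, rfl⟩) hc
    have hWt : Tendsto (fun n => W (xs n)) atTop (𝓝 0) := by
      have hrw : ∀ n, W (xs n) = ∫ s, indicator (Ioo a (xs n)) G s := fun n => by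
        simp only [hWdef]
        rw [integral_indicator measurableSet_Ioo]
      have hdc : Tendsto (fun n => ∫ s, indicator (Ioo a (xs n)) G s) atTop
          (𝓝 (∫ s : ℝ, (0:ℝ))) := by
        refine tendsto_integral_filter_of_dominated_convergence
          (indicator (Ioo a b) fun s => ‖G s‖) ?_ ?_ ?_ ?_
        · filter_upwards [hb'] with n hn
          rw [aestronglyMeasurable_indicator_iff measurableSet_Ioo]
          exact hG_m.mono_measure (Measure.restrict_mono (Ioo_subset_Ioo le_rfl hn.le) le_rfl)
        · filter_upwards [hb'] with n hn
          refine Eventually.of_forall fun s => ?_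
          by_cases hsm : s ∈ Ioo a (xs n)
          · rw [indicator_of_mem hsm, indicator_of_mem (Ioo_subset_Ioo le_rfl hn.le hsm)]
          · rw [indicator_of_notMem hsm, norm_zero]
            exact indicator_nonneg (fun s _ => norm_nonneg _) s
        · rw [integrable_indicator_iff measurableSet_Ioo]
          exact hG_int'.norm
        · refine Eventually.of_forall fun s => ?_
          rcases le_or_gt s a with hsa | hsa
          · refine tendsto_const_nhds.congr fun n => ?_
            exact (indicator_of_notMem
              (by simp only [mem_Ioo, not_and_or, not_lt]; exact Or.inl hsa) G).symm
          · refine tendsto_const_nhds.congr' ?_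
            filter_upwards [hxlim.eventually_lt_const hsa] with n hn
            exact (indicator_of_notMem
              (by simp only [mem_Ioo, not_and_or, not_lt]; exact Or.inr hn.le) G).symm
      rw [integral_zero] at hdc
      exact hdc.congr fun n => (hrw n).symm
    have hsum : Tendsto (fun n => Φ (xs n) + W (xs n)) atTop (𝓝 (sSup (Φ '' L) + 0)) :=
      hΦt.add hWt
    rw [add_zero] at hsum
    refine hsum.congr fun n => ?_
    simp only [hΦdef]
    ring
  · -- limit at b
    refine ⟨sInf (Φ '' L) + ∫ s in Ioo a b, G s, Ioo a b \ L, hLnull, ?_⟩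
    intro xs hxs hxlim
    have ha' : ∀ᶠ n in atTop, a < xs n := hxlim.eventually_const_lt hab
    have hb'' : ∀ n, xs n < b := fun n => (hxs n).1
    have hLn : ∀ᶠ n in atTop, xs n ∈ L := by
      filter_upwards [ha'] with n hn
      have h1 := hxs n
      by_contra hcon
      exact h1.2 ⟨⟨hn, hb'' n⟩, hcon⟩
    have hΦt : Tendsto (fun n => Φ (xs n)) atTop (𝓝 (sInf (Φ '' L))) := by
      rw [tendsto_order]
      constructor
      · intro c hc
        filter_upwards [hLn] with n h1
        exact lt_of_lt_of_le hc (csInf_le hΦbddB ⟨_, h1, rfl⟩)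
      · intro c hc
        obtain ⟨w, ⟨z, hzL, rfl⟩, hcw⟩ := exists_lt_of_csInf_lt (hLne.image Φ) hc
        have hzb : z < b := (hLsub hzL).2
        filter_upwards [hLn, hxlim.eventually_const_lt hzb] with n h1 h2
        exact lt_of_le_of_lt (hΦmono _ hzL _ h1 h2) hcw
    have hWt : Tendsto (fun n => W (xs n)) atTop (𝓝 (∫ s in Ioo a b, G s)) := by
      have hrw : ∀ n, W (xs n) = ∫ s, indicator (Ioo a (xs n)) G s := fun n => by
        simp only [hWdef]
        rw [integral_indicator measurableSet_Ioo]
      have hneb : ∀ᵐ s : ℝ, s ≠ b := by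
        rw [ae_iff]
        have : {s : ℝ | ¬ s ≠ b} = {b} := by ext s; simp
        rw [this]
        exact Real.volume_singleton
      have hdc : Tendsto (fun n => ∫ s, indicator (Ioo a (xs n)) G s) atTop
          (𝓝 (∫ s, indicator (Ioo a b) G s)) := by
        refine tendsto_integral_filter_of_dominated_convergence
          (indicator (Ioo a b) fun s => ‖G s‖) ?_ ?_ ?_ ?_
        · refine Eventually.of_forall fun n => ?_
          rw [aestronglyMeasurable_indicator_iff measurableSet_Ioo]
          exact hG_m.mono_measure
            (Measure.restrict_mono (Ioo_subset_Ioo le_rfl (hb'' n).le) le_rfl)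
        · refine Eventually.of_forall fun n => ?_
          refine Eventually.of_forall fun s => ?_
          by_cases hsm : s ∈ Ioo a (xs n)
          · rw [indicator_of_mem hsm,
              indicator_of_mem (Ioo_subset_Ioo le_rfl (hb'' n).le hsm)]
          · rw [indicator_of_notMem hsm, norm_zero]
            exact indicator_nonneg (fun s _ => norm_nonneg _) s
        · rw [integrable_indicator_iff measurableSet_Ioo]
          exact hG_int'.norm
        · filter_upwards [hneb] with s hs
          rcases le_or_gt s a with hsa | hsa
          · have he : ∀ n, indicator (Ioo a (xs n)) G s = indicator (Ioo a b) G s := by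
              intro n
              rw [indicator_of_notMem
                  (by simp only [mem_Ioo, not_and_or, not_lt]; exact Or.inl hsa) G,
                indicator_of_notMem
                  (by simp only [mem_Ioo, not_and_or, not_lt]; exact Or.inl hsa) G]
            exact tendsto_const_nhds.congr fun n => (he n).symm
          · rcases lt_trichotomy s b with hsb | hsb | hsb
            · rw [indicator_of_mem (show s ∈ Ioo a b from ⟨hsa, hsb⟩) G]
              refine tendsto_const_nhds.congr' ?_
              filter_upwards [hxlim.eventually_const_lt hsb] with n hn
              exact (indicator_of_mem (show s ∈ Ioo a (xs n) from ⟨hsa, hn⟩) G).symm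
            · exact absurd hsb hs
            · have hnb : indicator (Ioo a b) G s = 0 :=
                indicator_of_notMem
                  (by simp only [mem_Ioo, not_and_or, not_lt]; exact Or.inr hsb.le) G
              rw [hnb]
              refine tendsto_const_nhds.congr fun n => ?_
              exact (indicator_of_notMem
                (by simp only [mem_Ioo, not_and_or, not_lt]
                    exact Or.inr (by linarith [hb'' n])) G).symm
      rw [integral_indicator measurableSet_Ioo] at hdc
      exact hdc.congr fun n => (hrw n).symm
    have hsum : Tendsto (fun n => Φ (xs n) + W (xs n)) atTop
        (𝓝 (sInf (Φ '' L) + ∫ s in Ioo a b, G s)) := hΦt.add hWt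
    refine hsum.congr fun n => ?_
    simp only [hΦdef]
    ring
end
end

section
/- Let Ω = (a,b) be a bounded open interval, H ∈ W^{1,∞}(ℝ) with H(0)=0, u₀ ∈ BV(Ω), m₁, m₂ ∈ ℝ, and let u be an entropy solution of the Dirichlet problem (D_R) with data (u₀, m₁, m₂). Then for every t ∈ (0,T]: ‖u(·,t)‖_{L¹(Ω)} ≤ ‖u₀‖_{L¹(Ω)} + 2‖H‖_∞ t. -/
open MeasureTheory Filter Set
open scoped Topology ENNReal NNReal BigOperators

noncomputable section

/-- `f ∈ BV` on a one-dimensional region: the distributional derivative is a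
finite signed measure. -/
def BVOn1 (s : Set ℝ) (f : ℝ → ℝ) : Prop :=
  IntegrableOn f s volume ∧
  ∃ μ : SignedMeasure ℝ,
    ∀ φ : ℝ → ℝ, ContDiff ℝ 1 φ → HasCompactSupport φ → tsupport φ ⊆ s →
      (∫ x in s, f x * deriv φ x) = - sIntg μ φ

/-- `u ∈ BV(Q)` for a space-time region `Q`: the distributional gradient is a
finite (ℝ²-valued) signed measure. -/
def BVOn2 (Q : Set (ℝ × ℝ)) (u : ℝ → ℝ → ℝ) : Prop :=
  IntegrableOn (fun q : ℝ × ℝ => u q.1 q.2) Q volume ∧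
  ∃ μx μt : SignedMeasure (ℝ × ℝ),
    ∀ φ : ℝ × ℝ → ℝ, ContDiff ℝ 1 φ → HasCompactSupport φ → tsupport φ ⊆ Q →
      (∫ q in Q, u q.1 q.2 * fderiv ℝ φ q (1, 0)) = - sIntg μx φ ∧
      (∫ q in Q, u q.1 q.2 * fderiv ℝ φ q (0, 1)) = - sIntg μt φ

/-- `u ∈ BV_loc(Q)`. -/
def BVloc2 (Q : Set (ℝ × ℝ)) (u : ℝ → ℝ → ℝ) : Prop :=
  ∀ U : Set (ℝ × ℝ), IsOpen U → IsCompact (closure U) → closure U ⊆ Q → BVOn2 U u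

/-- Entropy subsolution of the Dirichlet problem `(D_R)` on `(a,b) × (0,T)`
with initial datum `u0` and finite boundary data `m₁` (at `a`) and `m₂` (at `b`). -/
structure SubSolDR (a b T : ℝ) (H : ℝ → ℝ) (u0 : ℝ → ℝ) (m₁ m₂ : ℝ)
    (w : ℝ → ℝ → ℝ) : Prop where
  bv : BVOn2 (Ioo a b ×ˢ Ioo 0 T) w
  entropy : ∀ k : ℝ, ∀ ζ : ℝ → ℝ → ℝ, IsTestCL (Ioo a b) T ζ →
    (∀ x t, 0 ≤ ζ x t) →
    -(∫ x in Ioo a b, pp (u0 x - k) * ζ x 0) ≤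
      ∫ t in Ioo (0:ℝ) T, ∫ x in Ioo a b,
        (pp (w x t - k) * deriv (ζ x) t
          + sgnp (w x t - k) * (H (w x t) - H k) * deriv (fun y => ζ y t) x)
  bdryA : ∀ k : ℝ, m₁ < k → ∀ β : ℝ → ℝ, IsTestT T β →
    ∃ l ≤ (0:ℝ), essLimWithin (BTrace T H sgnp w k β) (Ioi a) a l
  bdryB : ∀ k : ℝ, m₂ < k → ∀ β : ℝ → ℝ, IsTestT T β →
    ∃ l : ℝ, essLimWithin (BTrace T H sgnp w k β) (Iio b) b l ∧ 0 ≤ l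

/-- Entropy supersolution of the Dirichlet problem `(D_R)` on `(a,b) × (0,T)`
with initial datum `v0` and finite boundary data `n₁` (at `a`) and `n₂` (at `b`). -/
structure SuperSolDR (a b T : ℝ) (H : ℝ → ℝ) (v0 : ℝ → ℝ) (n₁ n₂ : ℝ)
    (w : ℝ → ℝ → ℝ) : Prop where
  bv : BVOn2 (Ioo a b ×ˢ Ioo 0 T) w
  entropy : ∀ k : ℝ, ∀ ζ : ℝ → ℝ → ℝ, IsTestCL (Ioo a b) T ζ →
    (∀ x t, 0 ≤ ζ x t) →
    -(∫ x in Ioo a b, np (v0 x - k) * ζ x 0) ≤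
      ∫ t in Ioo (0:ℝ) T, ∫ x in Ioo a b,
        (np (w x t - k) * deriv (ζ x) t
          + sgnm (w x t - k) * (H (w x t) - H k) * deriv (fun y => ζ y t) x)
  bdryA : ∀ k : ℝ, k < n₁ → ∀ β : ℝ → ℝ, IsTestT T β →
    ∃ l ≤ (0:ℝ), essLimWithin (BTrace T H sgnm w k β) (Ioi a) a l
  bdryB : ∀ k : ℝ, k < n₂ → ∀ β : ℝ → ℝ, IsTestT T β →
    ∃ l : ℝ, essLimWithin (BTrace T H sgnm w k β) (Iio b) b l ∧ 0 ≤ l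

/-! ### Auxiliary material for the proof of `stmt14` -/

structure Cut (p q : ℝ) where
  G : ℝ → ℝ
  ρ : ℝ → ℝ
  hd : ∀ x, HasDerivAt G (ρ x) x
  contρ : Continuous ρ
  nonnegρ : ∀ x, 0 ≤ ρ x
  suppρ : ∀ x, x ∉ Ioo p q → ρ x = 0
  G0 : ∀ x, x ≤ p → G x = 0
  G1 : ∀ x, q ≤ x → G x = 1
  Gnn : ∀ x, 0 ≤ G x
  Gle1 : ∀ x, G x ≤ 1
  intρ : Integrable ρ volume
  bndρ : ∃ M, ∀ x, ρ x ≤ M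

lemma Cut.smoothG {p q : ℝ} (c : Cut p q) : ContDiff ℝ 1 c.G := by
  rw [contDiff_one_iff_deriv]
  have hD : deriv c.G = c.ρ := funext fun x => (c.hd x).deriv
  exact ⟨fun x => (c.hd x).differentiableAt, by rw [hD]; exact c.contρ⟩

lemma Cut.intρ_set {p q : ℝ} (c : Cut p q) {s : Set ℝ} (hs : Ioo p q ⊆ s) :
    ∫ x in s, c.ρ x = ∫ x, c.ρ x :=
  setIntegral_eq_integral_of_forall_compl_eq_zero fun x hx => c.suppρ x fun hmem => hx (hs hmem)

lemma cut_exists {p q : ℝ} (hpq : p < q) :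
    ∃ c : Cut p q, ∫ x, c.ρ x = 1 := by
  set m : ℝ := (p + q) / 2 with hm
  have hq : 0 < q - p := by linarith
  set f : ContDiffBump m := ⟨(q - p)/4, (q - p)/3, by linarith, by linarith⟩ with hf
  set ρ : ℝ → ℝ := f.normed volume with hρ
  have hcont : Continuous ρ := f.continuous_normed
  have hint : Integrable ρ volume := f.integrable_normed
  have hsupp : ∀ x, x ∉ Ioo p q → ρ x = 0 := by
    intro x hx
    have : x ∉ Function.support ρ := by
      rw [hρ, f.support_normed_eq]
      intro hmem
      have : |x - m| < (q - p)/3 := by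
        simpa [Real.dist_eq] using Metric.mem_ball.1 hmem
      have h1 := abs_lt.1 this
      exact hx ⟨by simp only [hm] at h1 ⊢; cases h1; linarith,
        by simp only [hm] at h1 ⊢; cases h1; linarith⟩
    simpa [Function.mem_support, not_not] using this
  set G : ℝ → ℝ := fun x => ∫ y in p..x, ρ y with hG
  have hd : ∀ x, HasDerivAt G (ρ x) x := fun x =>
    intervalIntegral.integral_hasDerivAt_right (hint.intervalIntegrable)
      (hcont.stronglyMeasurableAtFilter volume (𝓝 x)) hcont.continuousAt
  have hmono : ∀ x y, x ≤ y → G x ≤ G y := by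
    intro x y hxy
    have : G y - G x = ∫ t in x..y, ρ t := by
      show (∫ t in p..y, ρ t) - ∫ t in p..x, ρ t = _
      rw [← intervalIntegral.integral_add_adjacent_intervals
        (hint.intervalIntegrable (a := p) (b := x)) (hint.intervalIntegrable (a := x) (b := y))]
      ring
    nlinarith [intervalIntegral.integral_nonneg (μ := volume) hxy
      (fun t _ => f.nonneg_normed (μ := volume) t), this]
  have hG0 : ∀ x, x ≤ p → G x = 0 := by
    intro x hx
    rw [hG]
    simp only
    rw [intervalIntegral.integral_symm]
    rw [intervalIntegral.integral_congr (g := fun _ => (0:ℝ))]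
    · simp
    · intro y hy
      rw [uIcc_of_le hx] at hy
      exact hsupp y (fun hmem => absurd hmem.1 (not_lt.2 hy.2))
  have htot : ∫ x, ρ x = 1 := f.integral_normed
  have hG1 : ∀ x, q ≤ x → G x = 1 := by
    intro x hx
    rw [hG]
    simp only
    rw [intervalIntegral.integral_of_le (by linarith)]
    rw [setIntegral_eq_integral_of_forall_compl_eq_zero]
    · exact htot
    · intro y hy
      refine hsupp y fun hmem => hy ⟨hmem.1, le_trans hmem.2.le hx⟩
  have hGnn : ∀ x, 0 ≤ G x := by
    intro x
    rcases le_or_gt x p with h | h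
    · rw [hG0 x h]
    · have := hmono p x h.le
      rw [hG0 p le_rfl] at this; exact this
  have hGle : ∀ x, G x ≤ 1 := by
    intro x
    rcases le_or_gt q x with h | h
    · rw [hG1 x h]
    · have := hmono x q h.le
      rw [hG1 q le_rfl] at this; exact this
  obtain ⟨M, hM⟩ := hcont.bounded_above_of_compact_support f.hasCompactSupport_normed
  refine ⟨⟨G, ρ, hd, hcont, fun x => f.nonneg_normed x, hsupp, hG0, hG1, hGnn, hGle, hint,
    M, fun x => ?_⟩, htot⟩
  calc ρ x ≤ |ρ x| := le_abs_self _
  _ ≤ M := by simpa [Real.norm_eq_abs] using hM x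

lemma pp_add_np (v : ℝ) : pp v + np v = |v| := by
  unfold pp np
  rcases le_or_gt 0 v with h | h
  · rw [max_eq_left h, max_eq_right (by linarith), abs_of_nonneg h]; ring
  · rw [max_eq_right h.le, max_eq_left (by linarith), abs_of_neg h]; ring

lemma pp_abs_le (v : ℝ) : |pp v| ≤ |v| := by
  unfold pp
  rcases le_total v 0 with h | h
  · rw [max_eq_right h, abs_zero]; exact abs_nonneg v
  · rw [max_eq_left h]

lemma np_abs_le (v : ℝ) : |np v| ≤ |v| := by
  unfold np
  rcases le_total (-v) 0 with h | h
  · rw [max_eq_right h, abs_zero]; exact abs_nonneg v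
  · rw [max_eq_left h, abs_neg]

lemma sgn_abs_le (v : ℝ) : |sgnp v + sgnm v| ≤ 1 := by
  unfold sgnp sgnm
  split_ifs <;> norm_num

lemma sgnp_meas : Measurable sgnp := by
  unfold sgnp
  exact Measurable.ite (measurableSet_lt measurable_const measurable_id)
    measurable_const measurable_const

lemma sgnm_meas : Measurable sgnm := by
  unfold sgnm
  exact Measurable.ite (measurableSet_lt measurable_id measurable_const)
    measurable_const measurable_const

lemma pp_cont : Continuous pp := by
  unfold pp; exact continuous_id.max continuous_const

lemma np_cont : Continuous np := by
  unfold np; exact continuous_id.neg.max continuous_const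

set_option maxHeartbeats 4000000 in
lemma key_estimate (a b T : ℝ) (hab : a < b) (hT : 0 < T)
    (H : ℝ → ℝ) (hHc : Continuous H) (hH0 : H 0 = 0)
    (u0 : ℝ → ℝ) (hu01 : IntegrableOn u0 (Ioo a b) volume) (m₁ m₂ : ℝ)
    (u : ℝ → ℝ → ℝ)
    (hsub : SubSolDR a b T H u0 m₁ m₂ u) (hsup : SuperSolDR a b T H u0 m₁ m₂ u)
    (hcont : ContL1 (Ioo a b) T u)
    (C : ℝ) (hC : ∀ v, |H v| ≤ C)
    (s : ℝ) (hs : s ∈ Ioo 0 T) (ε : ℝ) (hε : 0 < ε) (hε5 : ε < (b - a) / 5) :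
    (∫ x in Ioo (a + 2*ε) (b - 2*ε), |u x s|) ≤ (∫ x in Ioo a b, |u0 x|) + 2 * C * s := by
  have main : ∀ η : ℝ, 0 < η →
      (∫ x in Ioo (a + 2*ε) (b - 2*ε), |u x s|) ≤ (∫ x in Ioo a b, |u0 x|) + 2*C*s + η := by
    intro η hη
    have hs0 : 0 < s := hs.1
    have hsT : s < T := hs.2
    have hC0 : 0 ≤ C := (abs_nonneg _).trans (hC 0)
    have hsIcc : s ∈ Icc 0 T := ⟨hs0.le, hsT.le⟩
    -- continuity window
    have hev : ∀ᶠ t in 𝓝[Icc 0 T] s, (∫ x in Ioo a b, |u x t - u x s|) < η/2 :=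
      (hcont.2 s hsIcc).eventually_lt_const (by linarith)
    obtain ⟨U, hUsub, hUopen, hUs⟩ := mem_nhdsWithin.mp hev
    obtain ⟨δ₁, hδ₁pos, hball⟩ := Metric.isOpen_iff.mp hUsub s hUopen
    set δ : ℝ := min (min (δ₁/2) ((T - s)/2)) (η/(2*(2*C+1))) with hδdef
    have hδpos : 0 < δ := by
      refine lt_min (lt_min (by linarith) (by linarith)) (by positivity)
    have hδδ₁ : δ < δ₁ :=
      lt_of_le_of_lt ((min_le_left _ _).trans (min_le_left _ _)) (by linarith)
    have hδT : s + δ < T := by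
      have h1 : δ ≤ (T-s)/2 := (min_le_left _ _).trans (min_le_right _ _)
      linarith
    have hδη : 2*C*δ ≤ η/2 := by
      have h1 : δ ≤ η/(2*(2*C+1)) := min_le_right _ _
      have h2 : (0:ℝ) < 2*(2*C+1) := by linarith
      rw [le_div_iff₀ h2] at h1
      nlinarith
    have hwin : ∀ t ∈ Ioo s (s+δ), (∫ x in Ioo a b, |u x t - u x s|) < η/2 := by
      intro t ht
      apply hUs
      refine ⟨hball ?_, by constructor <;> [linarith [ht.1]; linarith [ht.2]]⟩
      rw [Metric.mem_ball, Real.dist_eq, abs_of_pos (by linarith [ht.1])]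
      linarith [ht.2]
    -- cut-off functions
    obtain ⟨c₁, hρ₁tot⟩ := cut_exists (show a+ε < a+2*ε by linarith)
    obtain ⟨c₂, hρ₂tot⟩ := cut_exists (show b-2*ε < b-ε by linarith)
    obtain ⟨c₃, hρ₃tot⟩ := cut_exists (show s < s+δ by linarith)
    set φ : ℝ → ℝ := fun x => c₁.G x * (1 - c₂.G x) with hφdef
    set θ : ℝ → ℝ := fun t => 1 - c₃.G t with hθdef
    set Dφ : ℝ → ℝ := fun x => c₁.ρ x * (1 - c₂.G x) - c₁.G x * c₂.ρ x with hDφdef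
    set Dθ : ℝ → ℝ := fun t => -(c₃.ρ t) with hDθdef
    have hφd : ∀ x, HasDerivAt φ (Dφ x) x := by
      intro x
      have h : HasDerivAt (fun y => c₁.G y * (1 - c₂.G y)) _ x := (c₁.hd x).mul ((c₂.hd x).const_sub 1)
      convert h using 1
      show c₁.ρ x * (1 - c₂.G x) - c₁.G x * c₂.ρ x = _
      ring
    have hθd : ∀ t, HasDerivAt θ (Dθ t) t := fun t => (c₃.hd t).const_sub 1
    have hφ01 : ∀ x, 0 ≤ φ x ∧ φ x ≤ 1 := by
      intro x
      have h1 := c₁.Gnn x; have h2 := c₁.Gle1 x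
      have h3 := c₂.Gnn x; have h4 := c₂.Gle1 x
      constructor
      · apply mul_nonneg h1; linarith
      · simp only [hφdef]; nlinarith
    have hθ01 : ∀ t, 0 ≤ θ t ∧ θ t ≤ 1 := by
      intro t
      have h1 := c₃.Gnn t; have h2 := c₃.Gle1 t
      constructor
      · simp only [hθdef]; linarith
      · simp only [hθdef]; linarith
    have hφ0left : ∀ x, x ≤ a+ε → φ x = 0 := by
      intro x hx; simp only [hφdef]; rw [c₁.G0 x hx]; ring
    have hφ0right : ∀ x, b-ε ≤ x → φ x = 0 := by
      intro x hx; simp only [hφdef]; rw [c₂.G1 x hx]; ring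
    have hφ1 : ∀ x, a+2*ε ≤ x → x ≤ b-2*ε → φ x = 1 := by
      intro x h1 h2; simp only [hφdef]; rw [c₁.G1 x h1, c₂.G0 x h2]; ring
    have hθ00 : θ 0 = 1 := by simp only [hθdef]; rw [c₃.G0 0 hs0.le]; ring
    have hθT : θ T = 0 := by simp only [hθdef]; rw [c₃.G1 T (by linarith)]; ring
    have hθafter : ∀ t, s+δ ≤ t → θ t = 0 := by
      intro t ht; simp only [hθdef]; rw [c₃.G1 t ht]; ring
    have hφc : Continuous φ :=
      (c₁.smoothG.continuous).mul (continuous_const.sub c₂.smoothG.continuous)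
    have hθc : Continuous θ := continuous_const.sub c₃.smoothG.continuous
    have hDφc : Continuous Dφ :=
      ((c₁.contρ).mul (continuous_const.sub c₂.smoothG.continuous)).sub
        ((c₁.smoothG.continuous).mul c₂.contρ)
    have hDθc : Continuous Dθ := c₃.contρ.neg
    -- the test function
    set ζ : ℝ → ℝ → ℝ := fun x t => φ x * θ t with hζdef
    have hζtest : IsTestCL (Ioo a b) T ζ := by
      refine ⟨?_, ⟨Icc (a+ε) (b-ε), isCompact_Icc, ?_, ?_⟩, ?_⟩
      · have hφs : ContDiff ℝ 1 φ := c₁.smoothG.mul (contDiff_const.sub c₂.smoothG)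
        have hθs : ContDiff ℝ 1 θ := contDiff_const.sub c₃.smoothG
        exact (hφs.comp contDiff_fst).mul (hθs.comp contDiff_snd)
      · intro x hx
        exact ⟨by linarith [hx.1], by linarith [hx.2]⟩
      · intro t x hx
        rw [Function.mem_support] at hx
        by_contra hxK
        rw [mem_Icc, not_and_or, not_le, not_le] at hxK
        apply hx
        show φ x * θ t = 0
        rcases hxK with h | h
        · rw [hφ0left x (le_of_lt h)]; ring
        · rw [hφ0right x (le_of_lt h)]; ring
      · intro x; show φ x * θ T = 0; rw [hθT]; ring
    have hζnn : ∀ x t, 0 ≤ ζ x t := fun x t => mul_nonneg (hφ01 x).1 (hθ01 t).1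
    have hEp := hsub.entropy 0 ζ hζtest hζnn
    have hEm := hsup.entropy 0 ζ hζtest hζnn
    -- rewrite the entropy inequalities
    have hζderiv_t : ∀ x t, deriv (ζ x) t = φ x * Dθ t := fun x t =>
      ((hθd t).const_mul (φ x)).deriv
    have hζderiv_x : ∀ x t, deriv (fun y => ζ y t) x = Dφ x * θ t := fun x t =>
      ((hφd x).mul_const (θ t)).deriv
    have hLp : (∫ x in Ioo a b, pp (u0 x - 0) * ζ x 0) = ∫ x in Ioo a b, pp (u0 x) * φ x := by
      congr 1 with x
      rw [sub_zero]
      show pp (u0 x) * (φ x * θ 0) = _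
      rw [hθ00, mul_one]
    have hLm : (∫ x in Ioo a b, np (u0 x - 0) * ζ x 0) = ∫ x in Ioo a b, np (u0 x) * φ x := by
      congr 1 with x
      rw [sub_zero]
      show np (u0 x) * (φ x * θ 0) = _
      rw [hθ00, mul_one]
    have hRp : (fun t => ∫ x in Ioo a b,
          (pp (u x t - 0) * deriv (ζ x) t
            + sgnp (u x t - 0) * (H (u x t) - H 0) * deriv (fun y => ζ y t) x))
        = fun t => ∫ x in Ioo a b,
          (pp (u x t) * (φ x * Dθ t) + sgnp (u x t) * H (u x t) * (Dφ x * θ t)) := by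
      funext t
      congr 1 with x
      rw [sub_zero, hH0, sub_zero, hζderiv_t x t, hζderiv_x x t]
    have hRm : (fun t => ∫ x in Ioo a b,
          (np (u x t - 0) * deriv (ζ x) t
            + sgnm (u x t - 0) * (H (u x t) - H 0) * deriv (fun y => ζ y t) x))
        = fun t => ∫ x in Ioo a b,
          (np (u x t) * (φ x * Dθ t) + sgnm (u x t) * H (u x t) * (Dφ x * θ t)) := by
      funext t
      congr 1 with x
      rw [sub_zero, hH0, sub_zero, hζderiv_t x t, hζderiv_x x t]
    have hEp' : -(∫ x in Ioo a b, pp (u0 x) * φ x) ≤ ∫ t in Ioo (0:ℝ) T, ∫ x in Ioo a b,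
        (pp (u x t) * (φ x * Dθ t) + sgnp (u x t) * H (u x t) * (Dφ x * θ t)) := by
      rw [← hLp]
      exact hEp.trans_eq (by rw [hRp])
    have hEm' : -(∫ x in Ioo a b, np (u0 x) * φ x) ≤ ∫ t in Ioo (0:ℝ) T, ∫ x in Ioo a b,
        (np (u x t) * (φ x * Dθ t) + sgnm (u x t) * H (u x t) * (Dφ x * θ t)) := by
      rw [← hLm]
      exact hEm.trans_eq (by rw [hRm])
    -- measures
    set μ : Measure ℝ := volume.restrict (Ioo a b) with hμdef
    set ν : Measure ℝ := volume.restrict (Ioo (0:ℝ) T) with hνdef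
    have hμfin : IsFiniteMeasure μ := by
      constructor
      rw [hμdef, Measure.restrict_apply_univ, Real.volume_Ioo]
      exact ENNReal.ofReal_lt_top
    have hνfin : IsFiniteMeasure ν := by
      constructor
      rw [hνdef, Measure.restrict_apply_univ, Real.volume_Ioo]
      exact ENNReal.ofReal_lt_top
    haveI := hμfin; haveI := hνfin
    have hu2 : Integrable (fun z : ℝ × ℝ => u z.1 z.2) (μ.prod ν) := by
      have h : Integrable (fun q : ℝ × ℝ => u q.1 q.2)
          ((volume : Measure (ℝ × ℝ)).restrict (Ioo a b ×ˢ Ioo 0 T)) := hsub.bv.1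
      rw [Measure.volume_eq_prod, ← Measure.prod_restrict] at h
      exact h
    have husw : Integrable (fun z : ℝ × ℝ => u z.2 z.1) (ν.prod μ) := by
      have h := hu2.swap
      exact h
    have hasm := husw.aestronglyMeasurable
    have haem := hasm.aemeasurable
    -- integrand pieces on the product space (z = (t, x))
    set Gp : ℝ × ℝ → ℝ := fun z => pp (u z.2 z.1) * (φ z.2 * Dθ z.1) with hGpdef
    set Gm : ℝ × ℝ → ℝ := fun z => np (u z.2 z.1) * (φ z.2 * Dθ z.1) with hGmdef
    set Fp : ℝ × ℝ → ℝ := fun z => sgnp (u z.2 z.1) * H (u z.2 z.1) * (Dφ z.2 * θ z.1) with hFpdef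
    set Fm : ℝ × ℝ → ℝ := fun z => sgnm (u z.2 z.1) * H (u z.2 z.1) * (Dφ z.2 * θ z.1) with hFmdef
    obtain ⟨M₁, hM₁⟩ := c₁.bndρ
    obtain ⟨M₂, hM₂⟩ := c₂.bndρ
    obtain ⟨M₃, hM₃⟩ := c₃.bndρ
    have hM₁0 : 0 ≤ M₁ := le_trans (c₁.nonnegρ 0) (hM₁ 0)
    have hM₂0 : 0 ≤ M₂ := le_trans (c₂.nonnegρ 0) (hM₂ 0)
    have hM₃0 : 0 ≤ M₃ := le_trans (c₃.nonnegρ 0) (hM₃ 0)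
    have hθ_abs : ∀ t, |θ t| ≤ 1 := fun t => by
      rw [abs_of_nonneg (hθ01 t).1]; exact (hθ01 t).2
    have hφ_abs : ∀ x, |φ x| ≤ 1 := fun x => by
      rw [abs_of_nonneg (hφ01 x).1]; exact (hφ01 x).2
    have hDθ_abs : ∀ t, |Dθ t| ≤ M₃ := by
      intro t
      simp only [hDθdef]
      rw [abs_neg, abs_of_nonneg (c₃.nonnegρ t)]
      exact hM₃ t
    have hDφ_abs : ∀ x, |Dφ x| ≤ c₁.ρ x + c₂.ρ x := by
      intro x
      simp only [hDφdef]
      have h1 := c₁.nonnegρ x; have h2 := c₂.nonnegρ x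
      have h3 := c₁.Gnn x; have h4 := c₁.Gle1 x
      have h5 := c₂.Gnn x; have h6 := c₂.Gle1 x
      rw [abs_le]
      constructor <;> nlinarith
    have hDφ_bnd : ∀ x, |Dφ x| ≤ M₁ + M₂ := fun x =>
      (hDφ_abs x).trans (add_le_add (hM₁ x) (hM₂ x))
    have hGp_int : Integrable Gp (ν.prod μ) := by
      refine Integrable.mono' (husw.abs.const_mul M₃)
        ((pp_cont.comp_aestronglyMeasurable hasm).mul
          (((hφc.comp continuous_snd).mul (hDθc.comp continuous_fst)).aestronglyMeasurable))
        (Eventually.of_forall fun z => ?_)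
      simp only [hGpdef]
      rw [Real.norm_eq_abs, abs_mul]
      calc |pp (u z.2 z.1)| * |φ z.2 * Dθ z.1| ≤ |u z.2 z.1| * M₃ := by
            apply mul_le_mul (pp_abs_le _) ?_ (abs_nonneg _) (abs_nonneg _)
            rw [abs_mul]
            calc |φ z.2| * |Dθ z.1| ≤ 1 * M₃ :=
                  mul_le_mul (hφ_abs _) (hDθ_abs _) (abs_nonneg _) zero_le_one
              _ = M₃ := one_mul _
        _ = M₃ * |u z.2 z.1| := mul_comm _ _
    have hGm_int : Integrable Gm (ν.prod μ) := by
      refine Integrable.mono' (husw.abs.const_mul M₃)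
        ((np_cont.comp_aestronglyMeasurable hasm).mul
          (((hφc.comp continuous_snd).mul (hDθc.comp continuous_fst)).aestronglyMeasurable))
        (Eventually.of_forall fun z => ?_)
      simp only [hGmdef]
      rw [Real.norm_eq_abs, abs_mul]
      calc |np (u z.2 z.1)| * |φ z.2 * Dθ z.1| ≤ |u z.2 z.1| * M₃ := by
            apply mul_le_mul (np_abs_le _) ?_ (abs_nonneg _) (abs_nonneg _)
            rw [abs_mul]
            calc |φ z.2| * |Dθ z.1| ≤ 1 * M₃ :=
                  mul_le_mul (hφ_abs _) (hDθ_abs _) (abs_nonneg _) zero_le_one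
              _ = M₃ := one_mul _
        _ = M₃ * |u z.2 z.1| := mul_comm _ _
    have hsgnpH : ∀ v, |sgnp v * H v| ≤ C := by
      intro v; unfold sgnp; split_ifs
      · rw [one_mul]; exact hC v
      · rw [zero_mul, abs_zero]; exact hC0
    have hsgnmH : ∀ v, |sgnm v * H v| ≤ C := by
      intro v; unfold sgnm; split_ifs
      · rw [neg_one_mul, abs_neg]; exact hC v
      · rw [zero_mul, abs_zero]; exact hC0
    have hM₁₂0 : (0:ℝ) ≤ M₁ + M₂ := by linarith
    have hFp_int : Integrable Fp (ν.prod μ) := by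
      refine Integrable.mono' (integrable_const (C * (M₁ + M₂)))
        ((((sgnp_meas.comp_aemeasurable haem).aestronglyMeasurable).mul
          (hHc.comp_aestronglyMeasurable hasm)).mul
          (((hDφc.comp continuous_snd).mul (hθc.comp continuous_fst)).aestronglyMeasurable))
        (Eventually.of_forall fun z => ?_)
      simp only [hFpdef]
      rw [Real.norm_eq_abs, abs_mul]
      have e2 : |Dφ z.2 * θ z.1| ≤ M₁ + M₂ := by
        rw [abs_mul]
        calc |Dφ z.2| * |θ z.1| ≤ (M₁+M₂) * 1 :=
              mul_le_mul (hDφ_bnd _) (hθ_abs _) (abs_nonneg _) hM₁₂0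
          _ = M₁+M₂ := mul_one _
      exact mul_le_mul (hsgnpH _) e2 (abs_nonneg _) hC0
    have hFm_int : Integrable Fm (ν.prod μ) := by
      refine Integrable.mono' (integrable_const (C * (M₁ + M₂)))
        ((((sgnm_meas.comp_aemeasurable haem).aestronglyMeasurable).mul
          (hHc.comp_aestronglyMeasurable hasm)).mul
          (((hDφc.comp continuous_snd).mul (hθc.comp continuous_fst)).aestronglyMeasurable))
        (Eventually.of_forall fun z => ?_)
      simp only [hFmdef]
      rw [Real.norm_eq_abs, abs_mul]
      have e2 : |Dφ z.2 * θ z.1| ≤ M₁ + M₂ := by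
        rw [abs_mul]
        calc |Dφ z.2| * |θ z.1| ≤ (M₁+M₂) * 1 :=
              mul_le_mul (hDφ_bnd _) (hθ_abs _) (abs_nonneg _) hM₁₂0
          _ = M₁+M₂ := mul_one _
      exact mul_le_mul (hsgnmH _) e2 (abs_nonneg _) hC0
    -- Fubini
    have hfub_p : (∫ t in Ioo (0:ℝ) T, ∫ x in Ioo a b,
          (pp (u x t) * (φ x * Dθ t) + sgnp (u x t) * H (u x t) * (Dφ x * θ t)))
        = ∫ z, (Gp z + Fp z) ∂(ν.prod μ) := by
      have hint : Integrable (Function.uncurry fun t x => Gp (t, x) + Fp (t, x)) (ν.prod μ) := by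
        have h : (Function.uncurry fun t x => Gp (t, x) + Fp (t, x))
            = fun z => Gp z + Fp z := rfl
        rw [h]; exact hGp_int.add hFp_int
      exact MeasureTheory.integral_integral hint
    have hfub_m : (∫ t in Ioo (0:ℝ) T, ∫ x in Ioo a b,
          (np (u x t) * (φ x * Dθ t) + sgnm (u x t) * H (u x t) * (Dφ x * θ t)))
        = ∫ z, (Gm z + Fm z) ∂(ν.prod μ) := by
      have hint : Integrable (Function.uncurry fun t x => Gm (t, x) + Fm (t, x)) (ν.prod μ) := by
        have h : (Function.uncurry fun t x => Gm (t, x) + Fm (t, x))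
            = fun z => Gm z + Fm z := rfl
        rw [h]; exact hGm_int.add hFm_int
      exact MeasureTheory.integral_integral hint
    rw [hfub_p] at hEp'
    rw [hfub_m] at hEm'
    -- merge the left-hand sides
    have hppφ_int : Integrable (fun x => pp (u0 x) * φ x) μ := by
      refine Integrable.mono' hu01.abs
        ((pp_cont.comp_aestronglyMeasurable hu01.aestronglyMeasurable).mul
          hφc.aestronglyMeasurable)
        (Eventually.of_forall fun x => ?_)
      rw [Real.norm_eq_abs, abs_mul]
      calc |pp (u0 x)| * |φ x| ≤ |u0 x| * 1 :=
            mul_le_mul (pp_abs_le _) (hφ_abs _) (abs_nonneg _) (abs_nonneg _)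
        _ = |u0 x| := mul_one _
    have hnpφ_int : Integrable (fun x => np (u0 x) * φ x) μ := by
      refine Integrable.mono' hu01.abs
        ((np_cont.comp_aestronglyMeasurable hu01.aestronglyMeasurable).mul
          hφc.aestronglyMeasurable)
        (Eventually.of_forall fun x => ?_)
      rw [Real.norm_eq_abs, abs_mul]
      calc |np (u0 x)| * |φ x| ≤ |u0 x| * 1 :=
            mul_le_mul (np_abs_le _) (hφ_abs _) (abs_nonneg _) (abs_nonneg _)
        _ = |u0 x| := mul_one _
    have hL : (∫ x in Ioo a b, pp (u0 x) * φ x) + (∫ x in Ioo a b, np (u0 x) * φ x)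
        = ∫ x in Ioo a b, |u0 x| * φ x := by
      rw [← integral_add hppφ_int hnpφ_int]
      congr 1 with x
      rw [← pp_add_np (u0 x)]
      ring
    have habsφ0_int : Integrable (fun x => |u0 x| * φ x) μ :=
      (hppφ_int.add hnpφ_int).congr (Eventually.of_forall fun x => by
        show pp (u0 x) * φ x + np (u0 x) * φ x = |u0 x| * φ x
        rw [← pp_add_np (u0 x)]; ring)
    have hLbound : (∫ x in Ioo a b, |u0 x| * φ x) ≤ ∫ x in Ioo a b, |u0 x| := by
      apply integral_mono habsφ0_int hu01.abs
      intro x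
      show |u0 x| * φ x ≤ |u0 x|
      have h1 := (hφ01 x).1; have h2 := (hφ01 x).2
      nlinarith [abs_nonneg (u0 x)]
    -- the time-derivative part
    set J : ℝ → ℝ := fun t => ∫ x in Ioo a b, |u x t| * φ x with hJdef
    have hGsum_eq : ∀ t, (∫ x, (Gp (t, x) + Gm (t, x)) ∂μ) = Dθ t * J t := by
      intro t
      have h1 : (fun x => Gp (t, x) + Gm (t, x)) = fun x => Dθ t * (|u x t| * φ x) := by
        funext x
        simp only [hGpdef, hGmdef]
        rw [← pp_add_np (u x t)]
        ring
      rw [h1, MeasureTheory.integral_const_mul]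
    have hGs_int : Integrable (fun z : ℝ × ℝ => Gp z + Gm z) (ν.prod μ) :=
      hGp_int.add hGm_int
    have hGsum_fub : (∫ z, (Gp z + Gm z) ∂(ν.prod μ)) = ∫ t in Ioo (0:ℝ) T, Dθ t * J t := by
      rw [MeasureTheory.integral_prod _ hGs_int]
      exact integral_congr_ae (Eventually.of_forall fun t => hGsum_eq t)
    have hJint' : Integrable (fun t => Dθ t * J t) ν := by
      have h := hGs_int.integral_prod_left
      exact h.congr (Eventually.of_forall fun t => hGsum_eq t)
    have habsφ_int : ∀ t, t ∈ Icc 0 T → Integrable (fun x => |u x t| * φ x) μ := by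
      intro t ht
      refine Integrable.mono' (hcont.1 t ht).abs
        ((continuous_abs.comp_aestronglyMeasurable (hcont.1 t ht).aestronglyMeasurable).mul
          hφc.aestronglyMeasurable)
        (Eventually.of_forall fun x => ?_)
      rw [Real.norm_eq_abs, abs_mul, abs_abs]
      have h1 := (hφ01 x).1; have h2 := (hφ01 x).2
      nlinarith [abs_nonneg (u x t), hφ_abs x, abs_abs (φ x)]
    have hρ₃ν : (∫ t in Ioo (0:ℝ) T, c₃.ρ t) = 1 := by
      rw [c₃.intρ_set (show Ioo s (s+δ) ⊆ Ioo (0:ℝ) T from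
        fun t ht => ⟨by linarith [ht.1], by linarith [ht.2]⟩)]
      exact hρ₃tot
    have hJs_diff : ∀ t ∈ Ioo s (s+δ), J s - η/2 ≤ J t := by
      intro t ht
      have htIcc : t ∈ Icc 0 T := ⟨by linarith [ht.1], by linarith [ht.2]⟩
      have hint_s : Integrable (fun x => |u x s| * φ x) μ := habsφ_int s hsIcc
      have hint_t : Integrable (fun x => |u x t| * φ x) μ := habsφ_int t htIcc
      have hJt : J s - J t ≤ ∫ x in Ioo a b, |u x t - u x s| := by
        have h0 : J s - J t = ∫ x in Ioo a b, (|u x s| * φ x - |u x t| * φ x) := by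
          simp only [hJdef]
          rw [integral_sub hint_s hint_t]
        rw [h0]
        apply integral_mono (hint_s.sub hint_t)
          (((hcont.1 t htIcc).sub (hcont.1 s hsIcc)).abs)
        intro x
        show |u x s| * φ x - |u x t| * φ x ≤ |u x t - u x s|
        have h1 := abs_sub_abs_le_abs_sub (u x s) (u x t)
        have h2 : |u x s - u x t| = |u x t - u x s| := abs_sub_comm _ _
        have h3 := (hφ01 x).1; have h4 := (hφ01 x).2
        have h5 := abs_nonneg (u x t - u x s)
        nlinarith
      linarith [hwin t ht]
    have htime : (∫ t in Ioo (0:ℝ) T, Dθ t * J t) ≤ -(J s) + η/2 := by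
      have hint1 : IntegrableOn (fun t => c₃.ρ t * (J s - η/2)) (Ioo (0:ℝ) T) volume :=
        (c₃.intρ.integrableOn).mul_const _
      have hint2 : IntegrableOn (fun t => c₃.ρ t * J t) (Ioo (0:ℝ) T) volume :=
        hJint'.neg.congr (Eventually.of_forall fun t => by
          show -(Dθ t * J t) = c₃.ρ t * J t
          simp only [hDθdef]; ring)
      have hmono2 : (∫ t in Ioo (0:ℝ) T, c₃.ρ t * (J s - η/2))
          ≤ ∫ t in Ioo (0:ℝ) T, c₃.ρ t * J t := by
        apply setIntegral_mono_on hint1 hint2 measurableSet_Ioo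
        intro t _
        show c₃.ρ t * (J s - η/2) ≤ c₃.ρ t * J t
        rcases eq_or_lt_of_le (c₃.nonnegρ t) with h0 | h0
        · rw [← h0]; simp
        · have htmem : t ∈ Ioo s (s+δ) := by
            by_contra hmem
            rw [c₃.suppρ t hmem] at h0
            exact lt_irrefl 0 h0
          exact mul_le_mul_of_nonneg_left (hJs_diff t htmem) (c₃.nonnegρ t)
      have h2 : (∫ t in Ioo (0:ℝ) T, Dθ t * J t) = -∫ t in Ioo (0:ℝ) T, c₃.ρ t * J t := by
        rw [← integral_neg]
        congr 1 with t
        simp only [hDθdef]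
        ring
      have h3 : (∫ t in Ioo (0:ℝ) T, c₃.ρ t * (J s - η/2)) = J s - η/2 := by
        rw [MeasureTheory.integral_mul_const, hρ₃ν, one_mul]
      rw [h2]
      linarith [hmono2, h3.symm.le, h3.le]
    -- the flux part
    have hflux : (∫ z, (Fp z + Fm z) ∂(ν.prod μ)) ≤ 2*C*(s+δ) := by
      have hpt : ∀ z : ℝ × ℝ, Fp z + Fm z ≤ θ z.1 * (C * (c₁.ρ z.2 + c₂.ρ z.2)) := by
        intro z
        have h1 : Fp z + Fm z
            = ((sgnp (u z.2 z.1) + sgnm (u z.2 z.1)) * H (u z.2 z.1)) * (Dφ z.2 * θ z.1) := by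
          simp only [hFpdef, hFmdef]; ring
        have h2 : |((sgnp (u z.2 z.1) + sgnm (u z.2 z.1)) * H (u z.2 z.1)) * (Dφ z.2 * θ z.1)|
            ≤ C * ((c₁.ρ z.2 + c₂.ρ z.2) * θ z.1) := by
          rw [abs_mul]
          apply mul_le_mul
          · rw [abs_mul]
            calc |sgnp (u z.2 z.1) + sgnm (u z.2 z.1)| * |H (u z.2 z.1)| ≤ 1 * C :=
                  mul_le_mul (sgn_abs_le _) (hC _) (abs_nonneg _) zero_le_one
              _ = C := one_mul _
          · rw [abs_mul, abs_of_nonneg (hθ01 _).1]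
            exact mul_le_mul_of_nonneg_right (hDφ_abs _) (hθ01 _).1
          · exact abs_nonneg _
          · exact hC0
        rw [h1]
        refine (le_abs_self _).trans (h2.trans_eq ?_)
        ring
      have hθν_int : Integrable θ ν := by
        refine Integrable.mono' (integrable_const (1:ℝ)) hθc.aestronglyMeasurable
          (Eventually.of_forall fun t => ?_)
        rw [Real.norm_eq_abs]; exact hθ_abs t
      have hρμ_int : Integrable (fun x => C * (c₁.ρ x + c₂.ρ x)) μ :=
        ((c₁.intρ.integrableOn).add (c₂.intρ.integrableOn)).const_mul C
      have hB_int : Integrable (fun z : ℝ × ℝ => θ z.1 * (C * (c₁.ρ z.2 + c₂.ρ z.2)))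
          (ν.prod μ) := hθν_int.mul_prod hρμ_int
      have hstep := integral_mono (hFp_int.add hFm_int) hB_int hpt
      have hθle : (∫ t, θ t ∂ν) ≤ s + δ := by
        have hθeq : (∫ t, θ t ∂ν) = ∫ t in Ioo (0:ℝ) T ∩ Iio (s+δ), θ t := by
          show (∫ t in Ioo (0:ℝ) T, θ t) = _
          rw [← setIntegral_indicator measurableSet_Iio]
          congr 1 with t
          by_cases h : t < s + δ
          · rw [indicator_of_mem (mem_Iio.mpr h)]
          · rw [indicator_of_notMem (by simpa using h), hθafter t (not_lt.1 h)]
        have hsub2 : Ioo (0:ℝ) T ∩ Iio (s+δ) ⊆ Ioo 0 (s+δ) := fun t ht => ⟨ht.1.1, ht.2⟩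
        have hmeas2 : MeasurableSet (Ioo (0:ℝ) T ∩ Iio (s+δ)) :=
          measurableSet_Ioo.inter measurableSet_Iio
        have hvol : (volume (Ioo (0:ℝ) T ∩ Iio (s+δ))).toReal ≤ s + δ := by
          have h1 : volume (Ioo (0:ℝ) T ∩ Iio (s+δ)) ≤ ENNReal.ofReal (s+δ) := by
            calc volume (Ioo (0:ℝ) T ∩ Iio (s+δ)) ≤ volume (Ioo (0:ℝ) (s+δ)) :=
                  measure_mono hsub2
              _ = ENNReal.ofReal (s+δ-0) := Real.volume_Ioo
              _ = ENNReal.ofReal (s+δ) := by rw [sub_zero]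
          exact ENNReal.toReal_le_of_le_ofReal (by positivity) h1
        calc (∫ t, θ t ∂ν) = ∫ t in Ioo (0:ℝ) T ∩ Iio (s+δ), θ t := hθeq
          _ ≤ ∫ _t in Ioo (0:ℝ) T ∩ Iio (s+δ), (1:ℝ) := by
              have hfin2 : volume (Ioo (0:ℝ) T ∩ Iio (s+δ)) < ⊤ :=
                lt_of_le_of_lt (measure_mono hsub2) measure_Ioo_lt_top
              have hθint2 : IntegrableOn θ (Ioo (0:ℝ) T ∩ Iio (s+δ)) volume := by
                refine Integrable.mono' (integrableOn_const (C := (1:ℝ)) hfin2.ne)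
                  hθc.aestronglyMeasurable.restrict (Eventually.of_forall fun t => ?_)
                rw [Real.norm_eq_abs]; exact hθ_abs t
              exact setIntegral_mono_on hθint2 (integrableOn_const (C := (1:ℝ)) hfin2.ne)
                hmeas2 (fun t _ => (hθ01 t).2)
          _ = (volume (Ioo (0:ℝ) T ∩ Iio (s+δ))).toReal := by
              rw [setIntegral_const, smul_eq_mul, mul_one, measureReal_def]
          _ ≤ s + δ := hvol
      have hρ1int : Integrable c₁.ρ μ := c₁.intρ.integrableOn
      have hρ2int : Integrable c₂.ρ μ := c₂.intρ.integrableOn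
      have h2 : (∫ x, c₁.ρ x ∂μ) = 1 :=
        (c₁.intρ_set (show Ioo (a+ε) (a+2*ε) ⊆ Ioo a b from
          fun x hx => ⟨by linarith [hx.1], by linarith [hx.2]⟩)).trans hρ₁tot
      have h3 : (∫ x, c₂.ρ x ∂μ) = 1 :=
        (c₂.intρ_set (show Ioo (b-2*ε) (b-ε) ⊆ Ioo a b from
          fun x hx => ⟨by linarith [hx.1], by linarith [hx.2]⟩)).trans hρ₂tot
      have hxint : (∫ x, C * (c₁.ρ x + c₂.ρ x) ∂μ) = C * 2 := by
        rw [MeasureTheory.integral_const_mul, integral_add hρ1int hρ2int, h2, h3]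
        ring
      calc (∫ z, (Fp z + Fm z) ∂(ν.prod μ))
          ≤ ∫ z, θ z.1 * (C * (c₁.ρ z.2 + c₂.ρ z.2)) ∂(ν.prod μ) := hstep
        _ = (∫ t, θ t ∂ν) * ∫ x, C * (c₁.ρ x + c₂.ρ x) ∂μ :=
            MeasureTheory.integral_prod_mul (μ := ν) (ν := μ) θ (fun x => C * (c₁.ρ x + c₂.ρ x))
        _ = (∫ t, θ t ∂ν) * (C * 2) := by rw [hxint]
        _ ≤ (s + δ) * (C * 2) := mul_le_mul_of_nonneg_right hθle (by positivity)
        _ = 2*C*(s+δ) := by ring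
    -- assemble
    have hsum := add_le_add hEp' hEm'
    have hR : (∫ z, (Gp z + Fp z) ∂(ν.prod μ)) + ∫ z, (Gm z + Fm z) ∂(ν.prod μ)
        = (∫ z, (Gp z + Gm z) ∂(ν.prod μ)) + ∫ z, (Fp z + Fm z) ∂(ν.prod μ) := by
      rw [integral_add hGp_int hFp_int, integral_add hGm_int hFm_int,
        integral_add hGp_int hGm_int, integral_add hFp_int hFm_int]
      ring
    have hfinal : -(∫ x in Ioo a b, |u0 x| * φ x) ≤ (-(J s) + η/2) + 2*C*(s+δ) := by
      calc -(∫ x in Ioo a b, |u0 x| * φ x)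
          = -(∫ x in Ioo a b, pp (u0 x) * φ x) + -(∫ x in Ioo a b, np (u0 x) * φ x) := by
            rw [← hL]; ring
        _ ≤ (∫ z, (Gp z + Fp z) ∂(ν.prod μ)) + ∫ z, (Gm z + Fm z) ∂(ν.prod μ) := hsum
        _ = (∫ z, (Gp z + Gm z) ∂(ν.prod μ)) + ∫ z, (Fp z + Fm z) ∂(ν.prod μ) := hR
        _ = (∫ t in Ioo (0:ℝ) T, Dθ t * J t) + ∫ z, (Fp z + Fm z) ∂(ν.prod μ) := by
            rw [hGsum_fub]
        _ ≤ (-(J s) + η/2) + 2*C*(s+δ) := add_le_add htime hflux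
    have hexp : 2*C*(s+δ) = 2*C*s + 2*C*δ := by ring
    have hJs_le : J s ≤ (∫ x in Ioo a b, |u0 x|) + 2*C*s + η := by
      have h1 := hLbound
      rw [hexp] at hfinal
      linarith [hδη]
    have hset : (∫ x in Ioo (a+2*ε) (b-2*ε), |u x s|) ≤ J s := by
      have h1 : (∫ x in Ioo (a+2*ε) (b-2*ε), |u x s|)
          = ∫ x in Ioo (a+2*ε) (b-2*ε), |u x s| * φ x :=
        (setIntegral_congr_fun measurableSet_Ioo fun x hx => by
          rw [hφ1 x hx.1.le hx.2.le, mul_one]).symm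
      rw [h1]
      have h2 : (∫ x in Ioo (a+2*ε) (b-2*ε), |u x s| * φ x)
          ≤ ∫ x in Ioo a b, |u x s| * φ x := by
        apply setIntegral_mono_set (habsφ_int s hsIcc)
          (Eventually.of_forall fun x => mul_nonneg (abs_nonneg _) (hφ01 x).1)
          (HasSubset.Subset.eventuallyLE
            (fun x hx => ⟨by linarith [hx.1], by linarith [hx.2]⟩))
      exact h2
    linarith [hset, hJs_le]
  by_contra hcon
  push_neg at hcon
  have h := main (((∫ x in Ioo (a + 2*ε) (b - 2*ε), |u x s|)
    - ((∫ x in Ioo a b, |u0 x|) + 2*C*s)) / 2) (by linarith)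
  linarith

set_option maxHeartbeats 2000000 in
/-- Lemma 5.4: `L¹` bound for the entropy solution of `(D_R)`:
`‖u(·,t)‖_{L¹} ≤ ‖u₀‖_{L¹} + 2‖H‖_∞ t`. -/
theorem stmt14 (a b T : ℝ) (hab : a < b) (hT : 0 < T)
    (H : ℝ → ℝ) (hW : W1inf H) (hH0 : H 0 = 0)
    (u0 : ℝ → ℝ) (hu0 : BVOn1 (Ioo a b) u0) (m₁ m₂ : ℝ)
    (u : ℝ → ℝ → ℝ)
    (hsub : SubSolDR a b T H u0 m₁ m₂ u) (hsup : SuperSolDR a b T H u0 m₁ m₂ u)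
    (hcont : ContL1 (Ioo a b) T u)
    (C : ℝ) (hC : ∀ v, |H v| ≤ C) :
    ∀ t ∈ Ioc (0:ℝ) T,
      (∫ x in Ioo a b, |u x t|) ≤ (∫ x in Ioo a b, |u0 x|) + 2 * C * t := by
  obtain ⟨_hbd, L, hL⟩ := hW
  have hHc : Continuous H := hL.continuous
  have hC0 : 0 ≤ C := (abs_nonneg _).trans (hC 0)
  have hmain : ∀ s, s ∈ Ioo 0 T →
      (∫ x in Ioo a b, |u x s|) ≤ (∫ x in Ioo a b, |u0 x|) + 2*C*s := by
    intro s hs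
    set e : ℕ → ℝ := fun n => (b - a) / (5 * ((n:ℝ) + 2)) with hedef
    have hepos : ∀ n, 0 < e n := by
      intro n
      apply div_pos (by linarith)
      positivity
    have helt : ∀ n, e n < (b - a) / 5 := by
      intro n
      simp only [hedef]
      apply div_lt_div_of_pos_left (by linarith) (by norm_num)
      have : (0:ℝ) ≤ (n:ℝ) := Nat.cast_nonneg n
      nlinarith
    set Sn : ℕ → Set ℝ := fun n => Ioo (a + 2 * e n) (b - 2 * e n) with hSdef
    have hmonoS : Monotone Sn := by
      intro n k hnk x hx
      have hek : e k ≤ e n := by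
        simp only [hedef]
        apply div_le_div_of_nonneg_left (by linarith) (by positivity)
        have : (n:ℝ) ≤ (k:ℝ) := Nat.cast_le.mpr hnk
        nlinarith
      exact ⟨by linarith [hx.1], by linarith [hx.2]⟩
    have hunion : (⋃ n, Sn n) = Ioo a b := by
      apply Subset.antisymm
      · intro x hx
        rcases mem_iUnion.1 hx with ⟨n, hn⟩
        exact ⟨by linarith [hn.1, hepos n], by linarith [hn.2, hepos n]⟩
      · intro x hx
        have hm : 0 < min (x - a) (b - x) := lt_min (by linarith [hx.1]) (by linarith [hx.2])
        obtain ⟨n, hn⟩ := exists_nat_gt (2 * (b - a) / (5 * min (x - a) (b - x)))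
        refine mem_iUnion.2 ⟨n, ?_, ?_⟩
        · have h1 : e n < min (x - a) (b - x) / 2 := by
            simp only [hedef]
            rw [div_lt_div_iff₀ (by positivity) (by norm_num)]
            rw [div_lt_iff₀ (by positivity)] at hn
            nlinarith
          have h2 : min (x - a) (b - x) ≤ x - a := min_le_left _ _
          linarith
        · have h1 : e n < min (x - a) (b - x) / 2 := by
            simp only [hedef]
            rw [div_lt_div_iff₀ (by positivity) (by norm_num)]
            rw [div_lt_iff₀ (by positivity)] at hn
            nlinarith
          have h2 : min (x - a) (b - x) ≤ b - x := min_le_right _ _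
          linarith
    have hfi : IntegrableOn (fun x => |u x s|) (⋃ n, Sn n) volume := by
      rw [hunion]
      exact (hcont.1 s ⟨hs.1.le, hs.2.le⟩).abs
    have htend := tendsto_setIntegral_of_monotone (fun _ => measurableSet_Ioo) hmonoS hfi
    rw [hunion] at htend
    apply le_of_tendsto htend
    refine Eventually.of_forall fun n => ?_
    exact key_estimate a b T hab hT H hHc hH0 u0 hu0.1 m₁ m₂ u hsub hsup hcont C hC
      s hs (e n) (hepos n) (helt n)
  intro t₀ ht₀
  have hIcc : t₀ ∈ Icc 0 T := ⟨ht₀.1.le, ht₀.2⟩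
  set sn : ℕ → ℝ := fun n => t₀ - t₀ / ((n:ℝ) + 2) with hsndef
  have hsn_mem : ∀ n, sn n ∈ Ioo 0 T := by
    intro n
    have h2 : (0:ℝ) < (n:ℝ) + 2 := by positivity
    constructor
    · simp only [hsndef]
      have h3 : t₀ / ((n:ℝ) + 2) < t₀ := div_lt_self ht₀.1 (by linarith)
      linarith
    · simp only [hsndef]
      have h4 : 0 < t₀ / ((n:ℝ) + 2) := div_pos ht₀.1 h2
      linarith [ht₀.2]
  have hsn_Icc : ∀ n, sn n ∈ Icc 0 T := fun n => ⟨(hsn_mem n).1.le, (hsn_mem n).2.le⟩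
  have hconv : Tendsto sn atTop (𝓝 t₀) := by
    have h1 : Tendsto (fun n : ℕ => t₀ / ((n:ℝ) + 2)) atTop (𝓝 0) := by
      have h2 := (tendsto_const_div_atTop_nhds_zero_nat t₀).comp (tendsto_add_atTop_nat 2)
      have h3 : ((fun n : ℕ => t₀ / (n:ℝ)) ∘ fun n => n + 2)
          = fun n : ℕ => t₀ / ((n:ℝ) + 2) := by
        funext n; simp only [Function.comp]; push_cast; ring
      rwa [h3] at h2
    have h4 := tendsto_const_nhds (x := t₀) (f := atTop (α := ℕ)) |>.sub h1
    simpa using h4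
  have hd0 : Tendsto (fun n => ∫ x in Ioo a b, |u x (sn n) - u x t₀|) atTop (𝓝 0) := by
    apply (hcont.2 t₀ hIcc).comp
    exact tendsto_nhdsWithin_iff.2 ⟨hconv, Eventually.of_forall hsn_Icc⟩
  have hA : Tendsto (fun n => ∫ x in Ioo a b, |u x (sn n)|) atTop
      (𝓝 (∫ x in Ioo a b, |u x t₀|)) := by
    rw [tendsto_iff_dist_tendsto_zero]
    apply squeeze_zero (fun n => dist_nonneg) ?_ hd0
    intro n
    rw [Real.dist_eq]
    have hin : Integrable (fun x => |u x (sn n)|) (volume.restrict (Ioo a b)) :=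
      (hcont.1 (sn n) (hsn_Icc n)).abs
    have hit : Integrable (fun x => |u x t₀|) (volume.restrict (Ioo a b)) :=
      (hcont.1 t₀ hIcc).abs
    have h1 : (∫ x in Ioo a b, |u x (sn n)|) - (∫ x in Ioo a b, |u x t₀|)
        = ∫ x in Ioo a b, (|u x (sn n)| - |u x t₀|) := (integral_sub hin hit).symm
    rw [h1]
    have h2 : |∫ x in Ioo a b, (|u x (sn n)| - |u x t₀|)|
        ≤ ∫ x in Ioo a b, |(|u x (sn n)| - |u x t₀|)| := by
      simpa [Real.norm_eq_abs] using
        norm_integral_le_integral_norm (μ := volume.restrict (Ioo a b))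
          (fun x => |u x (sn n)| - |u x t₀|)
    refine h2.trans ?_
    apply integral_mono (hin.sub hit).abs
      (((hcont.1 (sn n) (hsn_Icc n)).sub (hcont.1 t₀ hIcc)).abs)
    intro x
    exact abs_abs_sub_abs_le_abs_sub _ _
  have hB : Tendsto (fun n => (∫ x in Ioo a b, |u0 x|) + 2*C*(sn n)) atTop
      (𝓝 ((∫ x in Ioo a b, |u0 x|) + 2*C*t₀)) :=
    tendsto_const_nhds.add (hconv.const_mul _)
  have := le_of_tendsto_of_tendsto' hA hB fun n => hmain (sn n) (hsn_mem n)
  linarith [this]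
end
end
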